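/- arXiv:2010.08787 — 3 statements merged into one kernel-verified Lean document; each statement's English description precedes it below -/
import Mathlib

section
/- Assume the dewetting condition, and for each n ∈ ℕ let D_n ∈ C_n be a configuration. Then the following are equivalent: (i) there exists a constant C > 0 such that #∂D_n ≤ C √n for every n ∈ ℕ; (ii) there exists a constant C' > 0 such that E_n(μ_{D_n}) ≤ C' for every n ∈ ℕ. -/
open scoped BigOperators Classical Topology ENNReal
open Filter MeasureTheory

noncomputable section

/-!
Common setting: film lattice `L_F` with parameter `e_F = 1`, substrate spacing
`e_S = q/p` (`p, q` coprime positive integers), Heitmann–Radin potentials and the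
configurational energy `V_n` (with values in `EReal`, since the Heitmann–Radin
potential takes the value `+∞` below distance `1`).
-/

/-- Points of the plane. -/
abbrev Pt : Type := ℝ × ℝ

/-- The lattice vector `t₁ = (1,0)`. -/
def t1 : Pt := ((1 : ℝ), (0 : ℝ))

/-- The lattice vector `t₂ = (1/2, √3/2)`. -/
def t2 : Pt := ((1 / 2 : ℝ), Real.sqrt 3 / 2)

/-- Euclidean distance on `ℝ × ℝ`. -/
def dE (x y : Pt) : ℝ := Real.sqrt ((x.1 - y.1) ^ 2 + (x.2 - y.2) ^ 2)

/-- Substrate lattice spacing `e_S = q / p`. -/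
def eS (p q : ℕ) : ℝ := (q : ℝ) / (p : ℝ)

/-- The film lattice `L_F = {(0, e_S) + k₁ t₁ + k₂ t₂ : k₁ ∈ ℤ, k₂ ∈ ℕ ∪ {0}}`. -/
def LF (p q : ℕ) : Set Pt :=
  {x | ∃ (k₁ : ℤ) (k₂ : ℕ), x = (((0 : ℝ), eS p q) : Pt) + (k₁ : ℝ) • t1 + (k₂ : ℝ) • t2}

/-- The set `∂L_{FS} = {(k q, e_S) : k ∈ ℤ}` of lower-boundary film sites lying at
distance `e_S` above a substrate atom. -/
def bLFS (p q : ℕ) : Set Pt := {x | ∃ k : ℤ, x = (((k : ℝ) * (q : ℝ), eS p q) : Pt)}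

/-- Crystalline configurations with `n` atoms: subsets of `L_F` of cardinality `n`. -/
def Cn (p q n : ℕ) : Set (Finset Pt) := {D | ↑D ⊆ LF p q ∧ D.card = n}

/-- The Heitmann–Radin sticky-disc potential: `+∞` for `r < 1`, `-c_F` at `r = 1`,
`0` for `r > 1`. -/
def vF (cF : ℝ) (r : ℝ) : EReal :=
  if r < 1 then (⊤ : EReal) else if r = 1 then ((-cF : ℝ) : EReal) else (0 : EReal)

/-- The one-body substrate potential `v¹`: `-c_S` on `∂L_{FS}`, `0` otherwise. -/
def v1 (cS : ℝ) (p q : ℕ) (x : Pt) : ℝ := if x ∈ bLFS p q then -cS else 0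

/-- The total energy `V_n(D) = Σ_{(x,y) ∈ D×D, x ≠ y} v_F(|x-y|) + Σ_{x ∈ D} v¹(x)`. -/
def Vn (cF cS : ℝ) (p q : ℕ) (D : Finset Pt) : EReal :=
  (∑ e ∈ D.offDiag, vF cF (dE e.1 e.2)) + (((∑ x ∈ D, v1 cS p q x) : ℝ) : EReal)

/-- The dewetting condition: `c_S < 4c_F` if `q = 1` and `c_S < 6c_F` if `q ≠ 1`. -/
def Dewetting (cF cS : ℝ) (q : ℕ) : Prop := if q = 1 then cS < 4 * cF else cS < 6 * cF

/-- The boundary `∂D` of a configuration: atoms with fewer than `6` film neighbours. -/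
def bdry (D : Finset Pt) : Finset Pt :=
  D.filter fun x => (D.filter fun y => dE x y = 1).card < 6

/-- The empirical measure `μ_{D_n} = (1/n) Σ_{x ∈ D_n} δ_{x/√n}`. -/
def emp (n : ℕ) (D : Finset Pt) : Measure Pt :=
  ((n : ℝ≥0∞))⁻¹ • ∑ x ∈ D, Measure.dirac (((Real.sqrt n)⁻¹ : ℝ) • x)

/-- A configuration of `n` consecutive sites `{w, w + t₁, …, w + (n-1) t₁}` on `∂L_{FS}`. -/
def IsConsecutive (p q n : ℕ) (Dw : Finset Pt) : Prop :=
  ∃ w : Pt, w ∈ bLFS p q ∧ Dw = (Finset.range n).image fun i => w + (i : ℝ) • t1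

/-- Two atoms joined by a chain of atoms of `D` with consecutive distances `1`. -/
def chainConn (D : Finset Pt) (x y : Pt) : Prop :=
  Relation.ReflTransGen (fun a b => a ∈ D ∧ b ∈ D ∧ dE a b = 1) x y

/-- Connectedness of a configuration. -/
def IsConnectedConf (D : Finset Pt) : Prop := ∀ x ∈ D, ∀ y ∈ D, chainConn D x y

/-- `C` is a connected component of `D` (the set of atoms of `D` chain-connected to
some atom of `D`). -/
def IsComponent (D C : Finset Pt) : Prop :=
  ∃ x ∈ D, ∀ y : Pt, y ∈ C ↔ y ∈ D ∧ chainConn D x y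

/-- Almost-connectedness: connected if `q = 1`; if `q ≠ 1`, the connected components
can be enumerated so that each one is at distance at most `q` from the union of the
previous ones. -/
def AlmostConnected (q : ℕ) (D : Finset Pt) : Prop :=
  if q = 1 then IsConnectedConf D
  else
    ∃ (k : ℕ) (f : Fin k → Finset Pt),
      Function.Injective f ∧
      (∀ i, IsComponent D (f i)) ∧
      (∀ C : Finset Pt, IsComponent D C → ∃ i, C = f i) ∧
      (∀ i : Fin k, 1 ≤ (i : ℕ) →
        ∃ x ∈ f i, ∃ j : Fin k, j < i ∧ ∃ y ∈ f j, dE x y ≤ (q : ℝ))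

/-- Local energy `E_loc(x)` of a site with respect to the configuration `D`. -/
def Eloc (cF : ℝ) (D : Finset Pt) (x : Pt) : ℝ :=
  if x ∈ D then cF * (6 - ((D.filter fun y => dE x y = 1).card : ℝ)) else 0

/-- Height `y_M` of the topmost atom of `D` in the column of `x`. -/
def yM (D : Finset Pt) (x : Pt) : ℝ := sSup {y : ℝ | ((x.1, y) : Pt) ∈ D}

/-- The strip top `x̃ = (x¹, y_M)`. -/
def til (D : Finset Pt) (x : Pt) : Pt := (x.1, yM D x)

/-- The weight `w₊(x̃)`. -/
def wPlus (p q : ℕ) (D : Finset Pt) (x : Pt) : ℝ :=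
  if x + t1 ∈ D ∧ x + t1 ∈ bLFS p q ∧ til D x + t2 = til D (x + t1) + t2 - t1 then 1 / 2 else 1

/-- The weight `w₋(x̃)`. -/
def wMinus (p q : ℕ) (D : Finset Pt) (x : Pt) : ℝ :=
  if x - t1 ∈ D ∧ x - t1 ∈ bLFS p q ∧ til D x + t2 - t1 = til D (x - t1) + t2 then 1 / 2 else 1

/-- Lower strip energy `E_strip,below(x)`. -/
def EStripBelow (cF cS : ℝ) (p q : ℕ) (D : Finset Pt) (x : Pt) : ℝ :=
  if q = 1 then
    (1 / 2) * Eloc cF D x + (1 / 4) * Eloc cF D (x + t1) + (1 / 4) * Eloc cF D (x - t1) - cS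
  else
    Eloc cF D x + (1 / 2) * Eloc cF D (x + t1) + (1 / 2) * Eloc cF D (x - t1) - cS

/-- Upper strip energy `E_strip,above(x)`. -/
def EStripAbove (cF : ℝ) (p q : ℕ) (D : Finset Pt) (x : Pt) : ℝ :=
  (if til D x ≠ x then Eloc cF D (til D x) else 0) +
    wPlus p q D x * Eloc cF D (til D x + t2) +
    wMinus p q D x * Eloc cF D (til D x + t2 - t1)

/-- The strip energy `E_strip(x) = E_strip,below(x) + E_strip,above(x)`. -/
def EStrip (cF cS : ℝ) (p q : ℕ) (D : Finset Pt) (x : Pt) : ℝ :=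
  EStripBelow cF cS p q D x + EStripAbove cF p q D x

/-- `Δ_strip`: `4c_F - c_S` if `q = 1`, `6c_F - c_S` if `q ≠ 1`. -/
def DeltaStrip (cF cS : ℝ) (q : ℕ) : ℝ := if q = 1 then 4 * cF - cS else 6 * cF - cS

/-- The union `S(∂L_{FS})` of all strips of the configuration `D`. -/
def SLFS (p q : ℕ) (D : Finset Pt) : Finset Pt :=
  D.filter fun y => ∃ x, x ∈ D ∧ x ∈ bLFS p q ∧
    (y = x ∨ y = x + t1 ∨ y = x - t1 ∨ y = til D x ∨ y = til D x + t2 ∨ y = til D x + t2 - t1)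

/-- The rescaled energy `E_n(μ_{D_n}) = n^{-1/2} (V_n(D_n) + 6 c_F n)`. -/
def En (cF cS : ℝ) (p q n : ℕ) (D : Finset Pt) : EReal :=
  ((((Real.sqrt n)⁻¹ : ℝ)) : EReal) * (Vn cF cS p q D + ((6 * cF * (n : ℝ) : ℝ) : EReal))

-- ## geometry block
lemma sqrt3_pos : (0:ℝ) < Real.sqrt 3 := Real.sqrt_pos.mpr (by norm_num)

lemma sq_sqrt3 : (Real.sqrt 3) ^ 2 = 3 := Real.sq_sqrt (by norm_num)

lemma sq_half_sqrt3 : (Real.sqrt 3 / 2) ^ 2 = 3 / 4 := by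
  rw [div_pow, sq_sqrt3]; norm_num

lemma LF_coords {p q : ℕ} {x : Pt} (hx : x ∈ LF p q) :
    ∃ (a : ℤ) (b : ℕ), x.1 = (a : ℝ) + (b : ℝ)/2 ∧ x.2 = eS p q + (b : ℝ) * (Real.sqrt 3 / 2) := by
  obtain ⟨a, b, h⟩ := hx
  refine ⟨a, b, ?_, ?_⟩ <;> rw [h] <;> simp [t1, t2, Prod.smul_def] <;> ring

lemma diff_coords {p q : ℕ} {x y : Pt} (hx : x ∈ LF p q) (hy : y ∈ LF p q) :
    ∃ A B : ℤ, y.1 - x.1 = (A : ℝ) + (B : ℝ)/2 ∧ y.2 - x.2 = (B : ℝ) * (Real.sqrt 3 / 2) := by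
  obtain ⟨a, b, h1, h2⟩ := LF_coords hx
  obtain ⟨a', b', h1', h2'⟩ := LF_coords hy
  refine ⟨a' - a, (b' : ℤ) - (b : ℤ), ?_, ?_⟩
  · push_cast; rw [h1', h1]; ring
  · push_cast; rw [h2', h2]; ring

lemma dE_formula {A B : ℤ} {x y : Pt} (h1 : y.1 - x.1 = (A : ℝ) + (B : ℝ)/2)
    (h2 : y.2 - x.2 = (B : ℝ) * (Real.sqrt 3 / 2)) :
    dE x y = Real.sqrt (((A^2 + A*B + B^2 : ℤ) : ℝ)) := by
  unfold dE
  congr 1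
  have e1 : (x.1 - y.1)^2 = ((A:ℝ) + (B:ℝ)/2)^2 := by
    rw [show x.1 - y.1 = -(y.1 - x.1) by ring, h1]; ring
  have e2 : (x.2 - y.2)^2 = ((B:ℝ))^2 * (3/4) := by
    rw [show x.2 - y.2 = -(y.2 - x.2) by ring, h2]
    have := sq_sqrt3
    nlinarith [sq_sqrt3]
  push_cast
  rw [e1, e2]; ring

lemma int_form_nonneg (A B : ℤ) : 0 ≤ A^2 + A*B + B^2 := by nlinarith [sq_nonneg (2*A+B), sq_nonneg B]

lemma int_form_pos {A B : ℤ} (h : ¬(A = 0 ∧ B = 0)) : 1 ≤ A^2 + A*B + B^2 := by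
  rcases lt_or_ge (A^2 + A*B + B^2) 1 with hlt | hle
  · exfalso
    have h0 : A^2 + A*B + B^2 = 0 := le_antisymm (by omega) (int_form_nonneg A B)
    have h4 : (2*A+B)^2 + 3*B^2 = 0 := by linear_combination 4 * h0
    have hB : B = 0 := by nlinarith [sq_nonneg (2*A+B), sq_nonneg B]
    have hA : A = 0 := by nlinarith [sq_nonneg (2*A+B)]
    exact h ⟨hA, hB⟩
  · exact hle

lemma int_form_eq_one {A B : ℤ} (h : A^2 + A*B + B^2 = 1) :
    (A=1∧B=0)∨(A=-1∧B=0)∨(A=0∧B=1)∨(A=0∧B=-1)∨(A=-1∧B=1)∨(A=1∧B=-1) := by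
  have h4 : (2*A+B)^2 + 3*B^2 = 4 := by linear_combination 4 * h
  have hb1 : -1 ≤ B := by nlinarith [sq_nonneg (2*A+B)]
  have hb2 : B ≤ 1 := by nlinarith [sq_nonneg (2*A+B)]
  interval_cases B
  · have ha1 : -1 ≤ A := by nlinarith
    have ha2 : A ≤ 1 := by nlinarith
    interval_cases A <;> omega
  · have ha1 : -1 ≤ A := by nlinarith
    have ha2 : A ≤ 1 := by nlinarith
    interval_cases A <;> omega
  · have ha1 : -1 ≤ A := by nlinarith
    have ha2 : A ≤ 1 := by nlinarith
    interval_cases A <;> omega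

lemma one_le_dE {p q : ℕ} {x y : Pt} (hx : x ∈ LF p q) (hy : y ∈ LF p q) (hxy : x ≠ y) :
    1 ≤ dE x y := by
  obtain ⟨A, B, h1, h2⟩ := diff_coords hx hy
  rw [dE_formula h1 h2]
  have hAB : ¬(A = 0 ∧ B = 0) := by
    rintro ⟨rfl, rfl⟩
    apply hxy
    have : y.1 = x.1 := by push_cast at h1; linarith
    have : y.2 = x.2 := by push_cast at h2; linarith
    exact Prod.ext (by linarith) this |>.symm
  calc (1:ℝ) = Real.sqrt 1 := Real.sqrt_one.symm
    _ ≤ _ := Real.sqrt_le_sqrt (by exact_mod_cast int_form_pos hAB)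

lemma dE_self (x : Pt) : dE x x = 0 := by simp [dE]

lemma dE_offset {x y : Pt} (o : Pt) (hy : y = x + o) (ho : o.1^2 + o.2^2 = 1) : dE x y = 1 := by
  subst hy
  unfold dE
  rw [show (x.1 - (x + o).1) ^ 2 + (x.2 - (x + o).2) ^ 2 = o.1^2 + o.2^2 by simp only [Prod.fst_add, Prod.snd_add]; ring, ho, Real.sqrt_one]

lemma dE_eq_one_iff {p q : ℕ} {x y : Pt} (hx : x ∈ LF p q) (hy : y ∈ LF p q) :
    dE x y = 1 ↔ (y = x + t1 ∨ y = x - t1 ∨ y = x + t2 ∨ y = x - t2 ∨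
      y = x + (t2 - t1) ∨ y = x - (t2 - t1)) := by
  constructor
  · intro h
    obtain ⟨A, B, h1, h2⟩ := diff_coords hx hy
    rw [dE_formula h1 h2, Real.sqrt_eq_one] at h
    have h' : A^2 + A*B + B^2 = 1 := by exact_mod_cast h
    have hy1 : y.1 = x.1 + ((A:ℝ) + (B:ℝ)/2) := by linarith
    have hy2 : y.2 = x.2 + (B:ℝ) * (Real.sqrt 3/2) := by linarith
    have hyx : y = x + (((A:ℝ) + (B:ℝ)/2, (B:ℝ) * (Real.sqrt 3/2)) : Pt) := by
      apply Prod.ext <;> simp [hy1, hy2]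
    rcases int_form_eq_one h' with ⟨rfl, rfl⟩|⟨rfl,rfl⟩|⟨rfl,rfl⟩|⟨rfl,rfl⟩|⟨rfl,rfl⟩|⟨rfl,rfl⟩
    · refine Or.inl ?_
      rw [hyx]; norm_num [t1, t2, Prod.ext_iff] <;> try ring
    · refine Or.inr (Or.inl ?_)
      rw [hyx, sub_eq_add_neg]; norm_num [t1, t2, Prod.ext_iff] <;> try ring
    · refine Or.inr (Or.inr (Or.inl ?_))
      rw [hyx]; norm_num [t1, t2, Prod.ext_iff] <;> try ring
    · refine Or.inr (Or.inr (Or.inr (Or.inl ?_)))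
      rw [hyx, sub_eq_add_neg]; norm_num [t1, t2, Prod.ext_iff] <;> try ring
    · refine Or.inr (Or.inr (Or.inr (Or.inr (Or.inl ?_))))
      rw [hyx]; norm_num [t1, t2, Prod.ext_iff] <;> try ring
    · refine Or.inr (Or.inr (Or.inr (Or.inr (Or.inr ?_))))
      rw [hyx, sub_eq_add_neg]; norm_num [t1, t2, Prod.ext_iff] <;> try ring
  · have n1 : t1.1^2 + t1.2^2 = 1 := by norm_num [t1]
    have n2 : t2.1^2 + t2.2^2 = 1 := by
      norm_num [t2, sq_half_sqrt3]
    have n3 : (t2 - t1).1^2 + (t2 - t1).2^2 = 1 := by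
      norm_num [t1, t2, sq_half_sqrt3]
    rintro (rfl|rfl|rfl|rfl|rfl|rfl)
    · exact dE_offset t1 rfl n1
    · exact dE_offset (-t1) (sub_eq_add_neg x t1) (by norm_num [t1])
    · exact dE_offset t2 rfl n2
    · exact dE_offset (-t2) (sub_eq_add_neg x t2) (by norm_num [t2, sq_half_sqrt3])
    · exact dE_offset (t2 - t1) rfl n3
    · exact dE_offset (-(t2 - t1)) (sub_eq_add_neg x _) (by norm_num [t1, t2, sq_half_sqrt3])

-- ## counting block
def indD (D : Finset Pt) (z : Pt) : ℝ := if z ∈ D then 1 else 0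

lemma indD_nonneg (D : Finset Pt) (z : Pt) : 0 ≤ indD D z := by
  unfold indD; split_ifs <;> norm_num

lemma indD_le_one (D : Finset Pt) (z : Pt) : indD D z ≤ 1 := by
  unfold indD; split_ifs <;> norm_num

def degR (D : Finset Pt) (x : Pt) : ℝ :=
  indD D (x + t1) + indD D (x - t1) + indD D (x + t2) + indD D (x - t2) +
    indD D (x + (t2 - t1)) + indD D (x - (t2 - t1))

lemma degR_nonneg (D : Finset Pt) (x : Pt) : 0 ≤ degR D x := by
  unfold degR
  have h1 := indD_nonneg D (x + t1)
  have h2 := indD_nonneg D (x - t1)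
  have h3 := indD_nonneg D (x + t2)
  have h4 := indD_nonneg D (x - t2)
  have h5 := indD_nonneg D (x + (t2 - t1))
  have h6 := indD_nonneg D (x - (t2 - t1))
  linarith

lemma degR_le_six (D : Finset Pt) (x : Pt) : degR D x ≤ 6 := by
  unfold degR
  have h1 := indD_le_one D (x + t1)
  have h2 := indD_le_one D (x - t1)
  have h3 := indD_le_one D (x + t2)
  have h4 := indD_le_one D (x - t2)
  have h5 := indD_le_one D (x + (t2 - t1))
  have h6 := indD_le_one D (x - (t2 - t1))
  linarith

lemma deg_card {p q : ℕ} {D : Finset Pt} (hD : ↑D ⊆ LF p q) {x : Pt} (hx : x ∈ LF p q) :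
    ((D.filter fun y => dE x y = 1).card : ℝ) = degR D x := by
  have hfil : D.filter (fun y => dE x y = 1) =
      ({x + t1, x - t1, x + t2, x - t2, x + (t2 - t1), x - (t2 - t1)} : Finset Pt).filter
        (· ∈ D) := by
    ext y
    simp only [Finset.mem_filter, Finset.mem_insert, Finset.mem_singleton]
    constructor
    · rintro ⟨hyD, h1⟩
      exact ⟨(dE_eq_one_iff hx (hD hyD)).mp h1, hyD⟩
    · rintro ⟨hor, hyD⟩
      exact ⟨hyD, (dE_eq_one_iff hx (hD hyD)).mpr hor⟩
  rw [hfil, ← Finset.sum_boole]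
  have d1 : x + t1 ∉ ({x - t1, x + t2, x - t2, x + (t2 - t1), x - (t2 - t1)} : Finset Pt) := by
    have h3 := sqrt3_pos
    simp [t1, t2, Prod.ext_iff, sub_eq_add_neg, add_right_inj]
    try norm_num
    all_goals (intro h; nlinarith)
  have d2 : x - t1 ∉ ({x + t2, x - t2, x + (t2 - t1), x - (t2 - t1)} : Finset Pt) := by
    have h3 := sqrt3_pos
    simp [t1, t2, Prod.ext_iff, sub_eq_add_neg, add_right_inj]
    try norm_num
    all_goals (intro h; nlinarith)
  have d3 : x + t2 ∉ ({x - t2, x + (t2 - t1), x - (t2 - t1)} : Finset Pt) := by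
    have h3 := sqrt3_pos
    simp [t1, t2, Prod.ext_iff, sub_eq_add_neg, add_right_inj]
    try norm_num
    all_goals (intro h; nlinarith)
  have d4 : x - t2 ∉ ({x + (t2 - t1), x - (t2 - t1)} : Finset Pt) := by
    have h3 := sqrt3_pos
    simp [t1, t2, Prod.ext_iff, sub_eq_add_neg, add_right_inj]
    try norm_num
    all_goals (intro h; nlinarith)
  have d5 : x + (t2 - t1) ∉ ({x - (t2 - t1)} : Finset Pt) := by
    have h3 := sqrt3_pos
    simp [t1, t2, Prod.ext_iff, sub_eq_add_neg, add_right_inj]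
    try norm_num
    all_goals (intro h; nlinarith)
  rw [Finset.sum_insert d1, Finset.sum_insert d2, Finset.sum_insert d3, Finset.sum_insert d4,
    Finset.sum_insert d5, Finset.sum_singleton]
  unfold degR indD
  ring

-- ## sum lemmas
lemma sum_boole_real (s : Finset Pt) (P : Pt → Prop) :
    ∑ x ∈ s, (if P x then (1:ℝ) else 0) = ((s.filter P).card : ℝ) := by
  rw [Finset.sum_boole]

lemma sum_ind_swap (D : Finset Pt) (o : Pt) :
    ∑ x ∈ D, indD D (x + o) = ∑ x ∈ D, indD D (x - o) := by
  unfold indD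
  rw [show (∑ x ∈ D, (if x + o ∈ D then (1:ℝ) else 0))
        = (((D.filter (fun x => x + o ∈ D)).card : ℕ) : ℝ) from Finset.sum_boole _ _,
     show (∑ x ∈ D, (if x - o ∈ D then (1:ℝ) else 0))
        = (((D.filter (fun x => x - o ∈ D)).card : ℕ) : ℝ) from Finset.sum_boole _ _]
  congr 1
  apply Finset.card_nbij' (fun z => z + o) (fun z => z - o)
  · intro a ha
    simp only [Finset.mem_coe, Finset.mem_filter] at ha ⊢
    refine ⟨ha.2, by simpa using ha.1⟩
  · intro a ha
    simp only [Finset.mem_coe, Finset.mem_filter] at ha ⊢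
    refine ⟨ha.2, by simpa using ha.1⟩
  · intro a _; simp
  · intro a _; simp

-- ## rows and substrate sites
lemma bLFS_snd {p q : ℕ} {x : Pt} (hx : x ∈ bLFS p q) : x.2 = eS p q := by
  obtain ⟨k, rfl⟩ := hx; rfl

lemma LF_snd_ge {p q : ℕ} {x : Pt} (hx : x ∈ LF p q) : eS p q ≤ x.2 := by
  obtain ⟨a, b, h1, h2⟩ := LF_coords hx
  rw [h2]
  have : (0:ℝ) ≤ (b : ℝ) * (Real.sqrt 3 / 2) := by positivity
  linarith

lemma row0_mem_bLFS_q1 {p : ℕ} {x : Pt} (hx : x ∈ LF p 1) (h0 : x.2 = eS p 1) :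
    x ∈ bLFS p 1 := by
  obtain ⟨a, b, h1, h2⟩ := LF_coords hx
  have hb : (b:ℝ) * (Real.sqrt 3 / 2) = 0 := by rw [h0] at h2; linarith
  have hb0 : (b:ℝ) = 0 := by
    rcases mul_eq_zero.mp hb with h | h
    · exact h
    · exact absurd h (by have := sqrt3_pos; intro hh; linarith)
  refine ⟨a, ?_⟩
  apply Prod.ext
  · show x.1 = (a:ℝ) * ((1:ℕ):ℝ)
    rw [h1, hb0]; norm_num
  · exact h0

lemma bLFS_add_t1_not {p q : ℕ} (hq2 : 2 ≤ q) {x : Pt} (hx : x ∈ bLFS p q) :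
    x + t1 ∉ bLFS p q := by
  obtain ⟨k, rfl⟩ := hx
  rintro ⟨k', hk'⟩
  have h1 : ((k:ℝ) * q) + 1 = (k':ℝ) * q := by
    have := congrArg Prod.fst hk'
    simpa [t1] using this
  have h2 : (k * (q:ℤ) + 1 : ℤ) = k' * (q:ℤ) := by
    have : (((k * (q:ℤ) + 1 : ℤ)) : ℝ) = (((k' * (q:ℤ) : ℤ)) : ℝ) := by push_cast; linarith
    exact_mod_cast this
  have hdvd : (q:ℤ) ∣ 1 := ⟨k' - k, by linarith [h2]⟩
  have := Int.le_of_dvd one_pos hdvd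
  omega

lemma bLFS_snd_add_t1 (x : Pt) : (x + t1).2 = x.2 := by simp [t1]

-- ## the key counting inequality
lemma key_lower {p q : ℕ} (hq : 0 < q) {D : Finset Pt} (hD : ↑D ⊆ LF p q) :
    (if q = 1 then (4:ℝ) else 6) * ((D.filter (· ∈ bLFS p q)).card : ℝ)
      ≤ ∑ x ∈ D, (6 - degR D x) := by
  classical
  set R := D.filter (fun x => x.2 = eS p q) with hR
  set S := D.filter (· ∈ bLFS p q) with hS
  have hSR : S ⊆ R := by
    intro x hx
    rw [hS, Finset.mem_filter] at hx
    rw [hR, Finset.mem_filter]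
    exact ⟨hx.1, bLFS_snd hx.2⟩
  have hRD : R ⊆ D := Finset.filter_subset _ _
  -- decomposition of the summand
  have hsplit : ∑ x ∈ D, (6 - degR D x) =
      (∑ x ∈ D, (2 - (indD D (x + t1) + indD D (x - t1))))
      + ((∑ x ∈ D, (2 - (indD D (x + t2) + indD D (x + (t2 - t1)))))
      + (∑ x ∈ D, (2 - (indD D (x - t2) + indD D (x - (t2 - t1)))))) := by
    rw [← Finset.sum_add_distrib, ← Finset.sum_add_distrib]
    apply Finset.sum_congr rfl
    intro x _
    unfold degR
    ring
  -- up-sum equals down-sum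
  have hUD : ∑ x ∈ D, (2 - (indD D (x + t2) + indD D (x + (t2 - t1))))
      = ∑ x ∈ D, (2 - (indD D (x - t2) + indD D (x - (t2 - t1)))) := by
    rw [Finset.sum_sub_distrib, Finset.sum_sub_distrib]
    congr 1
    rw [Finset.sum_add_distrib, Finset.sum_add_distrib,
      sum_ind_swap D t2, sum_ind_swap D (t2 - t1)]
  -- the down-sum is at least 2 #R
  have hdown : 2 * (R.card : ℝ) ≤ ∑ x ∈ D, (2 - (indD D (x - t2) + indD D (x - (t2 - t1)))) := by
    have hterm : ∀ x ∈ R, (2:ℝ) = 2 - (indD D (x - t2) + indD D (x - (t2 - t1))) := by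
      intro x hx
      rw [hR, Finset.mem_filter] at hx
      have hy1 : x - t2 ∉ D := by
        intro hmem
        have hy := LF_snd_ge (hD hmem)
        have h2 : (x - t2).2 = eS p q - Real.sqrt 3 / 2 := by
          simp [t2, hx.2]
        rw [h2] at hy
        linarith [sqrt3_pos]
      have hy2 : x - (t2 - t1) ∉ D := by
        intro hmem
        have hy := LF_snd_ge (hD hmem)
        have h2 : (x - (t2 - t1)).2 = eS p q - Real.sqrt 3 / 2 := by
          simp [t1, t2, hx.2]
        rw [h2] at hy
        linarith [sqrt3_pos]
      unfold indD
      rw [if_neg hy1, if_neg hy2]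
      ring
    calc 2 * (R.card : ℝ) = ∑ _x ∈ R, (2:ℝ) := by rw [Finset.sum_const]; push_cast; ring
      _ = ∑ x ∈ R, (2 - (indD D (x - t2) + indD D (x - (t2 - t1)))) :=
          Finset.sum_congr rfl hterm
      _ ≤ _ := by
          apply Finset.sum_le_sum_of_subset_of_nonneg hRD
          intro x _ _
          have h1 := indD_le_one D (x - t2)
          have h2 := indD_le_one D (x - (t2 - t1))
          linarith
  -- horizontal sum bounds
  have hhor0 : (0:ℝ) ≤ ∑ x ∈ D, (2 - (indD D (x + t1) + indD D (x - t1))) := by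
    apply Finset.sum_nonneg
    intro x _
    have h1 := indD_le_one D (x + t1)
    have h2 := indD_le_one D (x - t1)
    linarith
  by_cases hq1 : q = 1
  · -- q = 1 : R = S
    subst hq1
    have hRS : R ⊆ S := by
      intro x hx
      rw [hR, Finset.mem_filter] at hx
      rw [hS, Finset.mem_filter]
      exact ⟨hx.1, row0_mem_bLFS_q1 (hD hx.1) hx.2⟩
    have hcard : (S.card : ℝ) = (R.card : ℝ) := by
      exact_mod_cast congrArg _ (Finset.Subset.antisymm hSR hRS)
    rw [if_pos rfl, hsplit, ← hUD, hcard]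
    linarith
  · -- q ≥ 2
    have hq2 : 2 ≤ q := by omega
    rw [if_neg hq1, hsplit, ← hUD]
    -- bound the horizontal sum from below on R
    set T := R.filter (fun x => x ∉ bLFS p q) with hT
    have hTcard : (S.card : ℝ) + (T.card : ℝ) = (R.card : ℝ) := by
      have hS' : S = R.filter (fun x => x ∈ bLFS p q) := by
        rw [hS, hR, Finset.filter_filter]
        apply Finset.filter_congr
        intro x _
        constructor
        · intro h; exact ⟨bLFS_snd h, h⟩
        · intro h; exact h.2
      have hfc := Finset.card_filter_add_card_filter_not
        (s := R) (p := fun x => x ∈ bLFS p q)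
      have hTT : (R.filter (fun a => ¬ a ∈ bLFS p q)) = T := rfl
      rw [hTT, ← hS'] at hfc
      exact_mod_cast hfc
    -- the number of right-bonds inside row 0
    have hsum_hor : ∑ x ∈ D, (2 - (indD D (x + t1) + indD D (x - t1)))
        ≥ 2 * (R.card : ℝ) - 2 * ((R.filter (fun x => x + t1 ∈ D)).card : ℝ) := by
      have hswap : ∑ x ∈ R, indD D (x - t1) = ∑ x ∈ R, indD D (x + t1) := by
        unfold indD
        rw [show (∑ x ∈ R, (if x - t1 ∈ D then (1:ℝ) else 0))
              = (((R.filter (fun x => x - t1 ∈ D)).card : ℕ) : ℝ) from Finset.sum_boole _ _,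
           show (∑ x ∈ R, (if x + t1 ∈ D then (1:ℝ) else 0))
              = (((R.filter (fun x => x + t1 ∈ D)).card : ℕ) : ℝ) from Finset.sum_boole _ _]
        congr 1
        apply Finset.card_nbij' (fun z => z - t1) (fun z => z + t1)
        · intro a ha
          rw [Finset.mem_coe, Finset.mem_filter] at ha
          obtain ⟨haR, haD⟩ := ha
          rw [hR, Finset.mem_filter] at haR
          rw [Finset.mem_coe, Finset.mem_filter, hR, Finset.mem_filter]
          refine ⟨⟨haD, ?_⟩, by simpa using haR.1⟩
          simp [t1]
          exact haR.2
        · intro a ha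
          rw [Finset.mem_coe, Finset.mem_filter] at ha
          obtain ⟨haR, haD⟩ := ha
          rw [hR, Finset.mem_filter] at haR
          rw [Finset.mem_coe, Finset.mem_filter, hR, Finset.mem_filter]
          refine ⟨⟨haD, ?_⟩, by simpa using haR.1⟩
          simp [t1]
          exact haR.2
        · intro a _; simp
        · intro a _; simp
      have hsubsum : ∑ x ∈ R, (2 - (indD D (x + t1) + indD D (x - t1)))
          ≤ ∑ x ∈ D, (2 - (indD D (x + t1) + indD D (x - t1))) := by
        apply Finset.sum_le_sum_of_subset_of_nonneg hRD
        intro x _ _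
        have h1 := indD_le_one D (x + t1)
        have h2 := indD_le_one D (x - t1)
        linarith
      have hsumR : ∑ x ∈ R, (2 - (indD D (x + t1) + indD D (x - t1)))
          = 2 * (R.card : ℝ) - 2 * ((R.filter (fun x => x + t1 ∈ D)).card : ℝ) := by
        rw [Finset.sum_sub_distrib, Finset.sum_add_distrib, hswap, Finset.sum_const]
        unfold indD
        rw [show (∑ x ∈ R, (if x + t1 ∈ D then (1:ℝ) else 0))
              = (((R.filter (fun x => x + t1 ∈ D)).card : ℕ) : ℝ) from Finset.sum_boole _ _]
        push_cast
        ring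
      linarith
    -- charging: each right-bond has a non-substrate endpoint in row 0
    have hcharge : ((R.filter (fun x => x + t1 ∈ D)).card : ℝ) ≤ 2 * (T.card : ℝ) := by
      set Φ := R.filter (fun x => x + t1 ∈ D) with hΦ
      have hsplitΦ : (Φ.filter (fun x => x ∈ bLFS p q)).card
          + (Φ.filter (fun x => ¬ x ∈ bLFS p q)).card = Φ.card :=
        Finset.card_filter_add_card_filter_not (s := Φ) (p := fun x => x ∈ bLFS p q)
      have h1 : (Φ.filter (fun x => ¬ x ∈ bLFS p q)).card ≤ T.card := by
        apply Finset.card_le_card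
        intro x hx
        rw [Finset.mem_filter] at hx
        rw [hT, Finset.mem_filter]
        exact ⟨(Finset.filter_subset _ _) hx.1, hx.2⟩
      have h2 : (Φ.filter (fun x => x ∈ bLFS p q)).card ≤ T.card := by
        apply Finset.card_le_card_of_injOn (fun x => x + t1)
        · intro x hx
          rw [Finset.mem_coe, Finset.mem_filter] at hx
          obtain ⟨hxΦ, hxb⟩ := hx
          rw [hΦ, Finset.mem_filter] at hxΦ
          obtain ⟨hxR, hxD⟩ := hxΦ
          rw [hR, Finset.mem_filter] at hxR
          rw [Finset.mem_coe, hT, Finset.mem_filter, hR, Finset.mem_filter]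
          refine ⟨⟨hxD, ?_⟩, bLFS_add_t1_not hq2 hxb⟩
          rw [bLFS_snd_add_t1]
          exact hxR.2
        · intro a _ b _ hab
          simpa using hab
      have hnat : Φ.card ≤ T.card + T.card := by
        rw [← hsplitΦ]
        exact add_le_add h2 h1
      have := (Nat.cast_le (α := ℝ)).mpr hnat
      push_cast at this
      linarith
    have hScast : (S.card : ℝ) ≤ (R.card : ℝ) := by
      exact_mod_cast Finset.card_le_card hSR
    linarith [hsum_hor, hcharge, hTcard, hdown, hScast]


lemma bdry_le_M {p q : ℕ} {D : Finset Pt} (hD : ↑D ⊆ LF p q) :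
    ((bdry D).card : ℝ) ≤ ∑ x ∈ D, (6 - degR D x) := by
  classical
  have hsplit := Finset.sum_filter_add_sum_filter_not D
    (fun x => (D.filter fun y => dE x y = 1).card < 6) (fun x => (6:ℝ) - degR D x)
  have hzero : ∑ x ∈ D.filter (fun x => ¬ (D.filter fun y => dE x y = 1).card < 6),
      ((6:ℝ) - degR D x) = 0 := by
    apply Finset.sum_eq_zero
    intro x hx
    rw [Finset.mem_filter, not_lt] at hx
    have hdc := deg_card hD (hD hx.1)
    have h6 : (6:ℝ) ≤ degR D x := by
      rw [← hdc]
      exact_mod_cast hx.2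
    have h6' := degR_le_six D x
    rw [← hdc] at h6' ⊢
    linarith
  have hone : ((bdry D).card : ℝ) ≤ ∑ x ∈ bdry D, ((6:ℝ) - degR D x) := by
    have : ∀ x ∈ bdry D, (1:ℝ) ≤ 6 - degR D x := by
      intro x hx
      rw [bdry, Finset.mem_filter] at hx
      have hdc := deg_card hD (hD hx.1)
      have : degR D x ≤ 5 := by
        rw [← hdc]
        exact_mod_cast Nat.lt_succ_iff.mp hx.2
      linarith
    calc ((bdry D).card : ℝ) = ∑ _x ∈ bdry D, (1:ℝ) := by rw [Finset.sum_const]; push_cast; ring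
      _ ≤ _ := Finset.sum_le_sum this
  rw [← hsplit]
  rw [bdry] at hone
  rw [hzero]
  simpa [bdry] using hone

lemma M_le_bdry {p q : ℕ} {D : Finset Pt} (hD : ↑D ⊆ LF p q) :
    ∑ x ∈ D, (6 - degR D x) ≤ 6 * ((bdry D).card : ℝ) := by
  classical
  have hsplit := Finset.sum_filter_add_sum_filter_not D
    (fun x => (D.filter fun y => dE x y = 1).card < 6) (fun x => (6:ℝ) - degR D x)
  have hzero : ∑ x ∈ D.filter (fun x => ¬ (D.filter fun y => dE x y = 1).card < 6),
      ((6:ℝ) - degR D x) = 0 := by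
    apply Finset.sum_eq_zero
    intro x hx
    rw [Finset.mem_filter, not_lt] at hx
    have hdc := deg_card hD (hD hx.1)
    have h6 : (6:ℝ) ≤ degR D x := by
      rw [← hdc]
      exact_mod_cast hx.2
    have h6' := degR_le_six D x
    linarith
  have hsix : ∑ x ∈ bdry D, ((6:ℝ) - degR D x) ≤ 6 * ((bdry D).card : ℝ) := by
    have : ∀ x ∈ bdry D, (6:ℝ) - degR D x ≤ 6 := by
      intro x _
      have := degR_nonneg D x
      linarith
    calc ∑ x ∈ bdry D, ((6:ℝ) - degR D x) ≤ ∑ _x ∈ bdry D, (6:ℝ) := Finset.sum_le_sum this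
      _ = 6 * ((bdry D).card : ℝ) := by rw [Finset.sum_const]; push_cast; ring
  rw [← hsplit, hzero]
  rw [bdry] at hsix
  simpa [bdry] using hsix


lemma Vn_eq {cF cS : ℝ} {p q : ℕ} {D : Finset Pt} (hD : ↑D ⊆ LF p q) :
    Vn cF cS p q D =
      (((- cF) * (∑ x ∈ D, degR D x) - cS * ((D.filter (· ∈ bLFS p q)).card : ℝ) : ℝ) : EReal) := by
  classical
  unfold Vn
  have h1 : ∀ e ∈ D.offDiag,
      vF cF (dE e.1 e.2) = (((if dE e.1 e.2 = 1 then -cF else 0 : ℝ)) : EReal) := by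
    intro e he
    rw [Finset.mem_offDiag] at he
    unfold vF
    rw [if_neg (not_lt.mpr (one_le_dE (hD he.1) (hD he.2.1) he.2.2))]
    split_ifs with h
    · rfl
    · exact EReal.coe_zero.symm
  rw [Finset.sum_congr rfl h1]
  have hhom : ∑ e ∈ D.offDiag, (((if dE e.1 e.2 = 1 then -cF else 0 : ℝ)) : EReal)
      = (((∑ e ∈ D.offDiag, if dE e.1 e.2 = 1 then -cF else 0 : ℝ)) : EReal) :=
    (map_sum (⟨⟨Real.toEReal, EReal.coe_zero⟩, EReal.coe_add⟩ : ℝ →+ EReal) _ _).symm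
  rw [hhom, ← EReal.coe_add]
  rw [EReal.coe_eq_coe_iff]
  -- now a real identity
  have hsub : D.offDiag ⊆ D ×ˢ D := by
    intro e he
    rw [Finset.mem_offDiag] at he
    rw [Finset.mem_product]
    exact ⟨he.1, he.2.1⟩
  have hext : (∑ e ∈ D.offDiag, if dE e.1 e.2 = 1 then -cF else 0)
      = ∑ e ∈ D ×ˢ D, (if dE e.1 e.2 = 1 then -cF else 0) := by
    apply Finset.sum_subset hsub
    intro e hmem hnot
    rw [Finset.mem_product] at hmem
    have : e.1 = e.2 := by
      by_contra hne
      exact hnot (Finset.mem_offDiag.mpr ⟨hmem.1, hmem.2, hne⟩)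
    rw [if_neg]
    rw [← this, dE_self]
    norm_num
  have hprod : (∑ e ∈ D ×ˢ D, (if dE e.1 e.2 = 1 then -cF else 0))
      = ∑ x ∈ D, ∑ y ∈ D, (if dE x y = 1 then -cF else 0) := Finset.sum_product _ _ _
  have hinner : ∀ x ∈ D, (∑ y ∈ D, (if dE x y = 1 then -cF else 0)) = -cF * degR D x := by
    intro x hx
    rw [← deg_card hD (hD hx)]
    rw [show (∑ y ∈ D, (if dE x y = 1 then -cF else 0))
          = ∑ y ∈ D, (-cF) * (if dE x y = 1 then (1:ℝ) else 0) by
        apply Finset.sum_congr rfl; intro y _; split_ifs <;> ring]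
    rw [← Finset.mul_sum]
    rw [show (∑ y ∈ D, (if dE x y = 1 then (1:ℝ) else 0))
          = (((D.filter (fun y => dE x y = 1)).card : ℕ) : ℝ) from Finset.sum_boole _ _]
  have hv1 : (∑ x ∈ D, v1 cS p q x)
      = -cS * ((D.filter (· ∈ bLFS p q)).card : ℝ) := by
    unfold v1
    rw [show (∑ x ∈ D, (if x ∈ bLFS p q then -cS else 0))
          = ∑ x ∈ D, (-cS) * (if x ∈ bLFS p q then (1:ℝ) else 0) by
        apply Finset.sum_congr rfl; intro y _; split_ifs <;> ring]
    rw [← Finset.mul_sum]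
    rw [show (∑ x ∈ D, (if x ∈ bLFS p q then (1:ℝ) else 0))
          = (((D.filter (fun x => x ∈ bLFS p q)).card : ℕ) : ℝ) from Finset.sum_boole _ _]
  rw [hext, hprod, Finset.sum_congr rfl hinner, ← Finset.mul_sum, hv1]
  ring

lemma En_eq {cF cS : ℝ} {p q n : ℕ} {D : Finset Pt} (hD : ↑D ⊆ LF p q)
    (hcard : D.card = n) :
    En cF cS p q n D =
      ((((Real.sqrt n)⁻¹ * (cF * (∑ x ∈ D, (6 - degR D x))
        - cS * ((D.filter (· ∈ bLFS p q)).card : ℝ))) : ℝ) : EReal) := by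
  unfold En
  rw [Vn_eq hD, ← EReal.coe_add, ← EReal.coe_mul, EReal.coe_eq_coe_iff]
  have hM : ∑ x ∈ D, ((6:ℝ) - degR D x) = 6 * (n:ℝ) - ∑ x ∈ D, degR D x := by
    rw [Finset.sum_sub_distrib, Finset.sum_const, hcard]
    push_cast
    ring
  rw [hM]
  ring



/-- in the dewetting regime, `#∂D_n ≤ C √n` for all `n` iff the
rescaled energies `E_n(μ_{D_n})` are equibounded. -/
theorem bdry_bound_iff_energy_bound
    (cF cS : ℝ) (hcF : 0 < cF) (hcS : 0 < cS)
    (p q : ℕ) (hp : 0 < p) (hq : 0 < q) (hpq : Nat.Coprime p q)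
    (hdew : Dewetting cF cS q)
    (D : ℕ → Finset Pt) (hD : ∀ n, D n ∈ Cn p q n) :
    (∃ C : ℝ, 0 < C ∧ ∀ n : ℕ, ((bdry (D n)).card : ℝ) ≤ C * Real.sqrt n) ↔
      (∃ C' : ℝ, 0 < C' ∧ ∀ n : ℕ, En cF cS p q n (D n) ≤ ((C' : ℝ) : EReal)) := by
  classical
  set lam : ℝ := if q = 1 then 4 else 6 with hlam
  have hlam_pos : 0 < lam := by
    rw [hlam]; split_ifs <;> norm_num
  have hdew' : cS < lam * cF := by
    unfold Dewetting at hdew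
    rw [hlam]
    split_ifs at hdew ⊢ with h
    · linarith
    · linarith
  -- abbreviations for each n
  have hsub : ∀ n, ↑(D n) ⊆ LF p q := fun n => (hD n).1
  have hcard : ∀ n, (D n).card = n := fun n => (hD n).2
  set M : ℕ → ℝ := fun n => ∑ x ∈ D n, (6 - degR (D n) x) with hMdef
  set s : ℕ → ℝ := fun n => (((D n).filter (· ∈ bLFS p q)).card : ℝ) with hsdef
  have hs_nonneg : ∀ n, 0 ≤ s n := fun n => by positivity
  have hkey : ∀ n, lam * s n ≤ M n := by
    intro n
    rw [hlam, hMdef, hsdef]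
    exact key_lower hq (hsub n)
  have hb1 : ∀ n, ((bdry (D n)).card : ℝ) ≤ M n := fun n => bdry_le_M (hsub n)
  have hb2 : ∀ n, M n ≤ 6 * ((bdry (D n)).card : ℝ) := fun n => M_le_bdry (hsub n)
  have hEn : ∀ n, En cF cS p q n (D n)
      = ((((Real.sqrt n)⁻¹ * (cF * M n - cS * s n)) : ℝ) : EReal) :=
    fun n => En_eq (hsub n) (hcard n)
  have hM_nonneg : ∀ n, 0 ≤ M n := by
    intro n
    have := hkey n
    have := hs_nonneg n
    nlinarith
  constructor
  · rintro ⟨C, hC, hCb⟩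
    refine ⟨6 * cF * C, by positivity, ?_⟩
    intro n
    rw [hEn n, EReal.coe_le_coe_iff]
    have h1 : cF * M n - cS * s n ≤ 6 * cF * C * Real.sqrt n := by
      have e1 : cF * M n ≤ cF * (6 * ((bdry (D n)).card : ℝ)) :=
        mul_le_mul_of_nonneg_left (hb2 n) hcF.le
      have e2 : ((bdry (D n)).card : ℝ) ≤ C * Real.sqrt n := hCb n
      nlinarith [hs_nonneg n, hcS.le]
    have hinv : (0:ℝ) ≤ (Real.sqrt n)⁻¹ := by positivity
    have h2 : (Real.sqrt n)⁻¹ * (cF * M n - cS * s n)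
        ≤ (Real.sqrt n)⁻¹ * (6 * cF * C * Real.sqrt n) :=
      mul_le_mul_of_nonneg_left h1 hinv
    have h3 : (Real.sqrt n)⁻¹ * (6 * cF * C * Real.sqrt n)
        = 6 * cF * C * ((Real.sqrt n)⁻¹ * Real.sqrt n) := by ring
    have h4 : (Real.sqrt n)⁻¹ * Real.sqrt n ≤ 1 := by
      rcases eq_or_ne (Real.sqrt n) 0 with h | h
      · rw [h]; norm_num
      · rw [inv_mul_cancel₀ h]
    have h5 : (0:ℝ) ≤ 6 * cF * C := by positivity
    calc (Real.sqrt n)⁻¹ * (cF * M n - cS * s n)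
        ≤ 6 * cF * C * ((Real.sqrt n)⁻¹ * Real.sqrt n) := by rw [← h3]; exact h2
      _ ≤ 6 * cF * C * 1 := mul_le_mul_of_nonneg_left h4 h5
      _ = 6 * cF * C := by ring
  · rintro ⟨C', hC', hCb⟩
    have hδ : 0 < cF - cS / lam := by
      rw [sub_pos, div_lt_iff₀ hlam_pos]
      linarith
    refine ⟨C' / (cF - cS / lam), by positivity, ?_⟩
    intro n
    rcases Nat.eq_zero_or_pos n with rfl | hn
    · have hD0 : D 0 = ∅ := Finset.card_eq_zero.mp (hcard 0)
      rw [hD0]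
      simp [bdry]
    · have hsq : (0:ℝ) < Real.sqrt n := Real.sqrt_pos.mpr (by exact_mod_cast hn)
      have hreal : (Real.sqrt n)⁻¹ * (cF * M n - cS * s n) ≤ C' := by
        have := hCb n
        rw [hEn n, EReal.coe_le_coe_iff] at this
        exact this
      have hY : cF * M n - cS * s n ≤ C' * Real.sqrt n := by
        have := mul_le_mul_of_nonneg_left hreal hsq.le
        rw [← mul_assoc, mul_inv_cancel₀ hsq.ne', one_mul] at this
        linarith
      have hδM : (cF - cS / lam) * M n ≤ cF * M n - cS * s n := by
        have h1 : cS * s n ≤ (cS / lam) * M n := by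
          have h2 : cS * s n = (cS / lam) * (lam * s n) := by
            field_simp
          rw [h2]
          exact mul_le_mul_of_nonneg_left (hkey n) (by positivity)
        linarith
      have hMb : M n ≤ C' / (cF - cS / lam) * Real.sqrt n := by
        rw [div_mul_eq_mul_div, le_div_iff₀ hδ]
        nlinarith [hδM, hY]
      linarith [hb1 n, hMb]
end
end

section
/- If D_n ∈ C_n is a nonempty almost-connected configuration, then its diameter satisfies diam(D_n) := max_{x,y ∈ D_n} |x − y| ≤ π q · #∂D_n. -/
open scoped BigOperators Classical Topology ENNReal
open Filter MeasureTheory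

noncomputable section

namespace Diam11

lemma s3_pos : (0:ℝ) < Real.sqrt 3 := Real.sqrt_pos.mpr (by norm_num)
lemma s3_sq : Real.sqrt 3 ^ 2 = 3 := Real.sq_sqrt (by norm_num)
lemma s3_ne : Real.sqrt 3 ≠ 0 := ne_of_gt s3_pos

/-- integer lattice coordinate functionals (as real values) -/
def g1 (p q : ℕ) (x : Pt) : ℝ := x.1 - (x.2 - eS p q) / Real.sqrt 3
def g2 (p q : ℕ) (x : Pt) : ℝ := 2 * (x.2 - eS p q) / Real.sqrt 3

lemma dE_comm (x y : Pt) : dE x y = dE y x := by unfold dE; ring_nf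

lemma dE_nonneg (x y : Pt) : 0 ≤ dE x y := Real.sqrt_nonneg _

lemma dE_eq_g (p q : ℕ) (x y : Pt) :
    dE x y = Real.sqrt ((g1 p q x - g1 p q y)^2
      + (g1 p q x - g1 p q y)*(g2 p q x - g2 p q y) + (g2 p q x - g2 p q y)^2) := by
  unfold dE g1 g2
  congr 1
  have h := s3_sq
  have hne := s3_ne
  field_simp
  linear_combination ((x.2-y.2)^2) * h

lemma LF_coords {p q : ℕ} {x : Pt} (hx : x ∈ LF p q) :
    ∃ (a : ℤ) (b : ℕ), g1 p q x = a ∧ g2 p q x = b := by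
  obtain ⟨k1, k2, rfl⟩ := hx
  refine ⟨k1, k2, ?_, ?_⟩
  · unfold g1 t1 t2
    have hne := s3_ne
    simp [Prod.fst_add, Prod.snd_add, smul_eq_mul]
    try field_simp
    try ring
  · unfold g2 t1 t2
    have hne := s3_ne
    simp [Prod.fst_add, Prod.snd_add, smul_eq_mul]
    try field_simp
    try ring

def F1 (p q : ℕ) (x : Pt) : ℤ := round (g1 p q x)
def F2 (p q : ℕ) (x : Pt) : ℤ := round (g2 p q x)
def F3 (p q : ℕ) (x : Pt) : ℤ := round (g1 p q x + g2 p q x)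

lemma F1_eq {p q : ℕ} {x : Pt} (hx : x ∈ LF p q) : (F1 p q x : ℝ) = g1 p q x := by
  obtain ⟨a, b, h1, h2⟩ := LF_coords hx
  rw [F1, h1, round_intCast]

lemma F2_eq {p q : ℕ} {x : Pt} (hx : x ∈ LF p q) : (F2 p q x : ℝ) = g2 p q x := by
  obtain ⟨a, b, h1, h2⟩ := LF_coords hx
  rw [F2, h2]; simp

lemma F3_eq {p q : ℕ} {x : Pt} (hx : x ∈ LF p q) : (F3 p q x : ℝ) = g1 p q x + g2 p q x := by
  obtain ⟨a, b, h1, h2⟩ := LF_coords hx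
  rw [F3, h1, h2]
  rw [show ((a:ℝ) + (b:ℝ)) = ((a + (b:ℤ) : ℤ) : ℝ) by push_cast; ring, round_intCast]
  try push_cast
  try ring


/-- The six lattice neighbours of a point. -/
def nbrs (x : Pt) : Finset Pt := {x + t1, x - t1, x + t2, x - t2, x + t1 - t2, x - t1 + t2}

lemma card_nbrs (x : Pt) : (nbrs x).card ≤ 6 := by
  have h1 := Finset.card_insert_le (x + t1) ({x - t1, x + t2, x - t2, x + t1 - t2, x - t1 + t2} : Finset Pt)
  have h2 := Finset.card_insert_le (x - t1) ({x + t2, x - t2, x + t1 - t2, x - t1 + t2} : Finset Pt)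
  have h3 := Finset.card_insert_le (x + t2) ({x - t2, x + t1 - t2, x - t1 + t2} : Finset Pt)
  have h4 := Finset.card_insert_le (x - t2) ({x + t1 - t2, x - t1 + t2} : Finset Pt)
  have h5 := Finset.card_insert_le (x + t1 - t2) ({x - t1 + t2} : Finset Pt)
  have h6 : ({x - t1 + t2} : Finset Pt).card = 1 := Finset.card_singleton _
  unfold nbrs
  omega

lemma pt_reconstruct {p q : ℕ} {x y : Pt} (a b : ℝ)
    (h1 : g1 p q x - g1 p q y = a) (h2 : g2 p q x - g2 p q y = b) :
    y = x + ((-(a + b / 2), -(b * Real.sqrt 3 / 2)) : Pt) := by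
  have hne := s3_ne
  have hsq := s3_sq
  unfold g1 at h1
  unfold g2 at h2
  have hy2 : y.2 = x.2 - b * Real.sqrt 3 / 2 := by
    field_simp at h2
    nlinarith [h2, hsq]
  have hy1 : y.1 = x.1 - (a + b / 2) := by
    rw [hy2] at h1
    field_simp at h1
    have h3 : Real.sqrt 3 * (2 * (y.1 - (x.1 - (a + b / 2)))) = 0 := by linear_combination -h1
    rcases mul_eq_zero.mp h3 with h | h
    · exact absurd h hne
    · linarith
  have : (x + ((-(a + b / 2), -(b * Real.sqrt 3 / 2)) : Pt)).1 = x.1 - (a + b/2) := by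
    simp [Prod.fst_add]; ring
  have h2' : (x + ((-(a + b / 2), -(b * Real.sqrt 3 / 2)) : Pt)).2 = x.2 - b * Real.sqrt 3 / 2 := by
    simp [Prod.snd_add]; ring
  exact Prod.ext (by rw [hy1, this]) (by rw [hy2, h2'])

lemma nbr_classify {p q : ℕ} {x y : Pt} (hx : x ∈ LF p q) (hy : y ∈ LF p q)
    (hd : dE x y = 1) : y ∈ nbrs x := by
  have hg := dE_eq_g p q x y
  set A : ℤ := F1 p q x - F1 p q y with hA
  set B : ℤ := F2 p q x - F2 p q y with hB
  have hAr : (A : ℝ) = g1 p q x - g1 p q y := by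
    rw [hA]; push_cast [F1_eq hx, F1_eq hy]; ring
  have hBr : (B : ℝ) = g2 p q x - g2 p q y := by
    rw [hB]; push_cast [F2_eq hx, F2_eq hy]; ring
  rw [hg] at hd
  have hrad : (g1 p q x - g1 p q y)^2 + (g1 p q x - g1 p q y)*(g2 p q x - g2 p q y)
      + (g2 p q x - g2 p q y)^2 = 1 := by
    have h0 : (0:ℝ) ≤ (g1 p q x - g1 p q y)^2 + (g1 p q x - g1 p q y)*(g2 p q x - g2 p q y)
        + (g2 p q x - g2 p q y)^2 := by nlinarith [sq_nonneg (g1 p q x - g1 p q y + g2 p q x - g2 p q y), sq_nonneg (g1 p q x - g1 p q y), sq_nonneg (g2 p q x - g2 p q y)]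
    have := Real.sqrt_eq_one.mp hd
    exact this
  have h2 : A^2 + A*B + B^2 = 1 := by
    have : ((A^2 + A*B + B^2 : ℤ) : ℝ) = 1 := by push_cast; rw [hAr, hBr]; linarith [hrad]
    exact_mod_cast this
  have habsA : |A| ≤ 1 := by
    by_contra h
    push_neg at h
    have h2' : 2 ≤ |A| := h
    have h4 : 4 ≤ A^2 := by rw [← sq_abs]; nlinarith
    nlinarith [sq_nonneg (2*B + A)]
  have habsB : |B| ≤ 1 := by
    by_contra h
    push_neg at h
    have h2' : 2 ≤ |B| := h
    have h4 : 4 ≤ B^2 := by rw [← sq_abs]; nlinarith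
    nlinarith [sq_nonneg (2*A + B)]
  obtain ⟨hA1, hA2⟩ := abs_le.mp habsA
  obtain ⟨hB1, hB2⟩ := abs_le.mp habsB
  have hA' : g1 p q x - g1 p q y = (A:ℝ) := hAr.symm
  have hB' : g2 p q x - g2 p q y = (B:ℝ) := hBr.symm
  have memtac : ∀ (v : Pt), y = x + v → v ∈ ({t1, -t1, t2, -t2, t1 - t2, -t1 + t2} : Finset Pt) → y ∈ nbrs x := by
    intro v hv hm
    simp only [Finset.mem_insert, Finset.mem_singleton] at hm
    simp only [nbrs, Finset.mem_insert, Finset.mem_singleton]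
    rcases hm with h|h|h|h|h|h
    · exact Or.inl (by rw [hv, h])
    · exact Or.inr (Or.inl (by rw [hv, h, sub_eq_add_neg]))
    · exact Or.inr (Or.inr (Or.inl (by rw [hv, h])))
    · exact Or.inr (Or.inr (Or.inr (Or.inl (by rw [hv, h, sub_eq_add_neg]))))
    · exact Or.inr (Or.inr (Or.inr (Or.inr (Or.inl (by rw [hv, h]; abel)))))
    · exact Or.inr (Or.inr (Or.inr (Or.inr (Or.inr (by rw [hv, h]; abel)))))
  interval_cases A <;> interval_cases B <;> (try norm_num at h2) <;> norm_num at hA' hB'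
  · -- A = -1, B = 0 : y = x + t1
    refine memtac t1 ?_ (by simp)
    have hrec := pt_reconstruct (-1) 0 hA' hB'
    rw [hrec]; congr 1; refine Prod.ext ?_ ?_ <;> simp [t1] <;> (try norm_num) <;> (try ring)
  · -- A = -1, B = 1 : y = x + (t1 - t2)
    refine memtac (t1 - t2) ?_ (by simp)
    have hrec := pt_reconstruct (-1) 1 hA' hB'
    rw [hrec]; congr 1; refine Prod.ext ?_ ?_ <;> simp [t1, t2, Prod.fst_sub, Prod.snd_sub] <;> (try norm_num) <;> (try ring)
  · -- A = 0, B = -1 : y = x + t2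
    refine memtac t2 ?_ (by simp)
    have hrec := pt_reconstruct 0 (-1) hA' hB'
    rw [hrec]; congr 1; refine Prod.ext ?_ ?_ <;> simp [t2] <;> (try norm_num) <;> (try ring)
  · -- A = 0, B = 1 : y = x + (-t2)
    refine memtac (-t2) ?_ (by simp)
    have hrec := pt_reconstruct 0 1 hA' hB'
    rw [hrec]; congr 1; refine Prod.ext ?_ ?_ <;> simp [t2, Prod.fst_neg, Prod.snd_neg] <;> (try norm_num) <;> (try ring)
  · -- A = 1, B = -1 : y = x + (-t1 + t2)
    refine memtac (-t1 + t2) ?_ (by simp)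
    have hrec := pt_reconstruct 1 (-1) hA' hB'
    rw [hrec]; congr 1; refine Prod.ext ?_ ?_ <;> simp [t1, t2, Prod.fst_add, Prod.snd_add, Prod.fst_neg, Prod.snd_neg] <;> (try norm_num) <;> (try ring)
  · -- A = 1, B = 0 : y = x + (-t1)
    refine memtac (-t1) ?_ (by simp)
    have hrec := pt_reconstruct 1 0 hA' hB'
    rw [hrec]; congr 1; refine Prod.ext ?_ ?_ <;> simp [t1, Prod.fst_neg, Prod.snd_neg] <;> (try norm_num) <;> (try ring)

lemma g1_shift (p q : ℕ) (z v : Pt) : g1 p q (z + v) = g1 p q z + (v.1 - v.2 / Real.sqrt 3) := by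
  unfold g1; simp [Prod.fst_add, Prod.snd_add]; ring

lemma g2_shift (p q : ℕ) (z v : Pt) : g2 p q (z + v) = g2 p q z + 2 * v.2 / Real.sqrt 3 := by
  unfold g2; simp [Prod.fst_add, Prod.snd_add]; ring

lemma g1_t1 (p q : ℕ) (z : Pt) : g1 p q (z + t1) = g1 p q z + 1 := by
  rw [g1_shift]; simp [t1]
lemma g2_t1 (p q : ℕ) (z : Pt) : g2 p q (z + t1) = g2 p q z := by
  rw [g2_shift]; simp [t1]
lemma g1_t2 (p q : ℕ) (z : Pt) : g1 p q (z + t2) = g1 p q z := by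
  have hne := s3_ne
  rw [g1_shift]; simp [t2]; try field_simp
  norm_num
lemma g2_t2 (p q : ℕ) (z : Pt) : g2 p q (z + t2) = g2 p q z + 1 := by
  have hne := s3_ne
  rw [g2_shift]; simp [t2]; try (field_simp; try ring)
lemma g1_t12 (p q : ℕ) (z : Pt) : g1 p q (z + (t1 - t2)) = g1 p q z + 1 := by
  have hne := s3_ne
  rw [g1_shift]; simp [t1, t2, Prod.fst_sub, Prod.snd_sub]; field_simp; ring
lemma g2_t12 (p q : ℕ) (z : Pt) : g2 p q (z + (t1 - t2)) = g2 p q z - 1 := by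
  have hne := s3_ne
  rw [g2_shift]; simp [t1, t2, Prod.fst_sub, Prod.snd_sub]; field_simp; ring

lemma round_shift (a : ℝ) : round (a + 1) = round a + 1 := by
  rw [show (a + 1 : ℝ) = a + ((1:ℤ):ℝ) by norm_num, round_add_intCast]
lemma round_shift' (a : ℝ) : round (a - 1) = round a - 1 := by
  rw [show (a - 1 : ℝ) = a + ((-1:ℤ):ℝ) by norm_num; ring, round_add_intCast]; ring

lemma F1_t1 (p q : ℕ) (z : Pt) : F1 p q (z + t1) = F1 p q z + 1 := by
  unfold F1; rw [g1_t1, round_shift]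
lemma F2_t1 (p q : ℕ) (z : Pt) : F2 p q (z + t1) = F2 p q z := by
  unfold F2; rw [g2_t1]
lemma F3_t1 (p q : ℕ) (z : Pt) : F3 p q (z + t1) = F3 p q z + 1 := by
  unfold F3; rw [g1_t1, g2_t1, show g1 p q z + 1 + g2 p q z = (g1 p q z + g2 p q z) + 1 by ring, round_shift]
lemma F1_t2 (p q : ℕ) (z : Pt) : F1 p q (z + t2) = F1 p q z := by
  unfold F1; rw [g1_t2]
lemma F2_t2 (p q : ℕ) (z : Pt) : F2 p q (z + t2) = F2 p q z + 1 := by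
  unfold F2; rw [g2_t2, round_shift]
lemma F3_t2 (p q : ℕ) (z : Pt) : F3 p q (z + t2) = F3 p q z + 1 := by
  unfold F3; rw [g1_t2, g2_t2, show g1 p q z + (g2 p q z + 1) = (g1 p q z + g2 p q z) + 1 by ring, round_shift]
lemma F1_t12 (p q : ℕ) (z : Pt) : F1 p q (z + (t1 - t2)) = F1 p q z + 1 := by
  unfold F1; rw [g1_t12, round_shift]
lemma F2_t12 (p q : ℕ) (z : Pt) : F2 p q (z + (t1 - t2)) = F2 p q z - 1 := by
  unfold F2; rw [g2_t12, round_shift']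
lemma F3_t12 (p q : ℕ) (z : Pt) : F3 p q (z + (t1 - t2)) = F3 p q z := by
  unfold F3; rw [g1_t12, g2_t12, show g1 p q z + 1 + (g2 p q z - 1) = g1 p q z + g2 p q z by ring]

/-- distance to a shifted point -/
lemma dE_add (z v : Pt) : dE z (z + v) = Real.sqrt (v.1 ^ 2 + v.2 ^ 2) := by
  unfold dE; simp [Prod.fst_add, Prod.snd_add]; try ring_nf

lemma dE_unit_t1 (z : Pt) : dE z (z + t1) = 1 := by
  rw [dE_add]; simp [t1]
lemma dE_unit_t2 (z : Pt) : dE z (z + t2) = 1 := by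
  rw [dE_add, t2]
  rw [show ((1/2 : ℝ), Real.sqrt 3 / 2).1 ^ 2 + ((1/2 : ℝ), Real.sqrt 3 / 2).2 ^ 2 = 1 by
    simp; rw [div_pow, s3_sq]; norm_num]
  exact Real.sqrt_one
lemma dE_unit_t12 (z : Pt) : dE z (z + (t1 - t2)) = 1 := by
  rw [dE_add]
  rw [show (t1 - t2).1 ^ 2 + (t1 - t2).2 ^ 2 = 1 by
    simp [t1, t2, Prod.fst_sub, Prod.snd_sub]; rw [div_pow, s3_sq]; norm_num]
  exact Real.sqrt_one

/-- the F-step bound along bonds of the lattice -/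
lemma F_step {p q : ℕ} {x y : Pt} (hx : x ∈ LF p q) (hy : y ∈ LF p q) (hd : dE x y = 1) :
    |F1 p q x - F1 p q y| ≤ 1 ∧ |F2 p q x - F2 p q y| ≤ 1 ∧ |F3 p q x - F3 p q y| ≤ 1 := by
  have hcl := nbr_classify hx hy hd
  simp only [nbrs, Finset.mem_insert, Finset.mem_singleton] at hcl
  have e2 : x - t1 = x + (-t1) := by abel
  have e4 : x - t2 = x + (-t2) := by abel
  have e5 : x + t1 - t2 = x + (t1 - t2) := by abel
  have e6 : x - t1 + t2 = x + (-(t1 - t2)) := by abel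
  have n1 : ∀ z : Pt, F1 p q (z + (-t1)) = F1 p q z - 1 := by
    intro z; have := F1_t1 p q (z + (-t1)); simp at this; omega
  have n2 : ∀ z : Pt, F2 p q (z + (-t1)) = F2 p q z := by
    intro z; have := F2_t1 p q (z + (-t1)); simp at this; omega
  have n3 : ∀ z : Pt, F3 p q (z + (-t1)) = F3 p q z - 1 := by
    intro z; have := F3_t1 p q (z + (-t1)); simp at this; omega
  have m1 : ∀ z : Pt, F1 p q (z + (-t2)) = F1 p q z := by
    intro z; have := F1_t2 p q (z + (-t2)); simp at this; omega
  have m2 : ∀ z : Pt, F2 p q (z + (-t2)) = F2 p q z - 1 := by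
    intro z; have := F2_t2 p q (z + (-t2)); simp at this; omega
  have m3 : ∀ z : Pt, F3 p q (z + (-t2)) = F3 p q z - 1 := by
    intro z; have := F3_t2 p q (z + (-t2)); simp at this; omega
  have k1 : ∀ z : Pt, F1 p q (z + (-(t1 - t2))) = F1 p q z - 1 := by
    intro z; have := F1_t12 p q (z + (-(t1 - t2))); rw [show z + -(t1 - t2) + (t1 - t2) = z by abel] at this; omega
  have k2 : ∀ z : Pt, F2 p q (z + (-(t1 - t2))) = F2 p q z + 1 := by
    intro z; have := F2_t12 p q (z + (-(t1 - t2))); rw [show z + -(t1 - t2) + (t1 - t2) = z by abel] at this; omega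
  have k3 : ∀ z : Pt, F3 p q (z + (-(t1 - t2))) = F3 p q z := by
    intro z; have := F3_t12 p q (z + (-(t1 - t2))); rw [show z + -(t1 - t2) + (t1 - t2) = z by abel] at this; omega
  rcases hcl with h|h|h|h|h|h
  · rw [h, F1_t1, F2_t1, F3_t1]; refine ⟨?_, ?_, ?_⟩ <;> simp
  · rw [h, e2, n1, n2, n3]; refine ⟨?_, ?_, ?_⟩ <;> simp
  · rw [h, F1_t2, F2_t2, F3_t2]; refine ⟨?_, ?_, ?_⟩ <;> simp
  · rw [h, e4, m1, m2, m3]; refine ⟨?_, ?_, ?_⟩ <;> simp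
  · rw [h, e5, F1_t12, F2_t12, F3_t12]; refine ⟨?_, ?_, ?_⟩ <;> simp
  · rw [h, e6, k1, k2, k3]; refine ⟨?_, ?_, ?_⟩ <;> simp

lemma abs_g_le (p q : ℕ) (x y : Pt) :
    |g1 p q x - g1 p q y| ≤ 2 / Real.sqrt 3 * dE x y ∧
    |g2 p q x - g2 p q y| ≤ 2 / Real.sqrt 3 * dE x y ∧
    |g1 p q x + g2 p q x - (g1 p q y + g2 p q y)| ≤ 2 / Real.sqrt 3 * dE x y := by
  have hs := s3_sq
  have hp := s3_pos
  have hne := s3_ne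
  set d1 := x.1 - y.1 with hd1
  set d2 := x.2 - y.2 with hd2
  have hd : dE x y = Real.sqrt (d1 ^ 2 + d2 ^ 2) := rfl
  clear_value d1 d2
  have hdd : (0:ℝ) ≤ d1 ^ 2 + d2 ^ 2 := add_nonneg (sq_nonneg d1) (sq_nonneg d2)
  have hR2 : (2 / Real.sqrt 3 * dE x y) ^ 2 = 4 / 3 * (d1 ^ 2 + d2 ^ 2) := by
    rw [hd, mul_pow, Real.sq_sqrt hdd, div_pow, hs]; ring
  have h0 : 0 ≤ 2 / Real.sqrt 3 * dE x y := mul_nonneg (by positivity) (dE_nonneg x y)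
  have key : ∀ e : ℝ, e ^ 2 ≤ (2 / Real.sqrt 3 * dE x y) ^ 2 → |e| ≤ 2 / Real.sqrt 3 * dE x y := by
    intro e he
    calc |e| = Real.sqrt (e ^ 2) := (Real.sqrt_sq_eq_abs e).symm
    _ ≤ Real.sqrt ((2 / Real.sqrt 3 * dE x y) ^ 2) := Real.sqrt_le_sqrt he
    _ = 2 / Real.sqrt 3 * dE x y := Real.sqrt_sq h0
  refine ⟨key _ ?_, key _ ?_, key _ ?_⟩ <;> rw [hR2]
  · have hΔ : g1 p q x - g1 p q y = (d1 * Real.sqrt 3 - d2) / Real.sqrt 3 := by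
      unfold g1; rw [hd1, hd2]; field_simp; ring
    rw [hΔ, div_pow, hs]
    have expand : 4 / 3 * (d1 ^ 2 + d2 ^ 2) - (d1 * Real.sqrt 3 - d2) ^ 2 / 3
        = (d1 + Real.sqrt 3 * d2) ^ 2 / 3 := by
      linear_combination (-(d1 ^ 2 + d2 ^ 2) / 3) * hs
    linarith [sq_nonneg (d1 + Real.sqrt 3 * d2), expand]
  · have hΔ : g2 p q x - g2 p q y = 2 * d2 / Real.sqrt 3 := by
      unfold g2; rw [hd2]; field_simp; ring
    rw [hΔ, div_pow, hs]
    nlinarith [sq_nonneg d1]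
  · have hΔ : g1 p q x + g2 p q x - (g1 p q y + g2 p q y) = (d1 * Real.sqrt 3 + d2) / Real.sqrt 3 := by
      unfold g1 g2; rw [hd1, hd2]; field_simp; ring
    rw [hΔ, div_pow, hs]
    have expand : 4 / 3 * (d1 ^ 2 + d2 ^ 2) - (d1 * Real.sqrt 3 + d2) ^ 2 / 3
        = (d1 - Real.sqrt 3 * d2) ^ 2 / 3 := by
      linear_combination (-(d1 ^ 2 + d2 ^ 2) / 3) * hs
    linarith [sq_nonneg (d1 - Real.sqrt 3 * d2), expand]

lemma F_jump {p q : ℕ} {x y : Pt} (hx : x ∈ LF p q) (hy : y ∈ LF p q) :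
    ((|F1 p q x - F1 p q y| : ℤ) : ℝ) ≤ 2 / Real.sqrt 3 * dE x y ∧
    ((|F2 p q x - F2 p q y| : ℤ) : ℝ) ≤ 2 / Real.sqrt 3 * dE x y ∧
    ((|F3 p q x - F3 p q y| : ℤ) : ℝ) ≤ 2 / Real.sqrt 3 * dE x y := by
  obtain ⟨h1, h2, h3⟩ := abs_g_le p q x y
  refine ⟨?_, ?_, ?_⟩
  · rw [Int.cast_abs]; push_cast; rw [F1_eq hx, F1_eq hy]; exact h1
  · rw [Int.cast_abs]; push_cast; rw [F2_eq hx, F2_eq hy]; exact h2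
  · rw [Int.cast_abs]; push_cast; rw [F3_eq hx, F3_eq hy]; exact h3

lemma dE_le_max3 {p q : ℕ} {x y : Pt} (hx : x ∈ LF p q) (hy : y ∈ LF p q) :
    dE x y ≤ max ((|F1 p q x - F1 p q y| : ℤ) : ℝ)
      (max ((|F2 p q x - F2 p q y| : ℤ) : ℝ) ((|F3 p q x - F3 p q y| : ℤ) : ℝ)) := by
  set a : ℝ := g1 p q x - g1 p q y with ha
  set b : ℝ := g2 p q x - g2 p q y with hb
  have e1 : ((|F1 p q x - F1 p q y| : ℤ) : ℝ) = |a| := by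
    rw [Int.cast_abs]; push_cast; rw [F1_eq hx, F1_eq hy]
  have e2 : ((|F2 p q x - F2 p q y| : ℤ) : ℝ) = |b| := by
    rw [Int.cast_abs]; push_cast; rw [F2_eq hx, F2_eq hy]
  have e3 : ((|F3 p q x - F3 p q y| : ℤ) : ℝ) = |a + b| := by
    rw [Int.cast_abs]; push_cast; rw [F3_eq hx, F3_eq hy, ha, hb]; ring_nf
  rw [e1, e2, e3]
  clear_value a b
  set M : ℝ := max |a| (max |b| |a + b|) with hM
  have hMa : |a| ≤ M := le_max_left _ _
  have hMb : |b| ≤ M := (le_max_left _ _).trans (le_max_right _ _)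
  have hMab : |a + b| ≤ M := (le_max_right _ _).trans (le_max_right _ _)
  have hM0 : 0 ≤ M := (abs_nonneg a).trans hMa
  have hsq : a ^ 2 + a * b + b ^ 2 ≤ M ^ 2 := by
    have ha2 : a ^ 2 ≤ M ^ 2 := by nlinarith [sq_abs a, abs_nonneg a]
    have hb2 : b ^ 2 ≤ M ^ 2 := by nlinarith [sq_abs b, abs_nonneg b]
    have hab2 : (a + b) ^ 2 ≤ M ^ 2 := by nlinarith [sq_abs (a + b), abs_nonneg (a + b)]
    rcases le_or_gt 0 (a * b) with h | h
    · nlinarith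
    · rcases le_total |a| |b| with hle | hle
      · have h1 : a ^ 2 + a * b ≤ 0 := by
          have : |a| * |a| ≤ |a| * |b| := mul_le_mul_of_nonneg_left hle (abs_nonneg a)
          have h2 : |a * b| = -(a * b) := abs_of_neg h
          have h3 : |a| * |b| = |a * b| := (abs_mul a b).symm
          nlinarith [sq_abs a]
        nlinarith
      · have h1 : b ^ 2 + a * b ≤ 0 := by
          have : |b| * |b| ≤ |b| * |a| := mul_le_mul_of_nonneg_left hle (abs_nonneg b)
          have h2 : |a * b| = -(a * b) := abs_of_neg h
          have h3 : |b| * |a| = |a * b| := by rw [abs_mul]; ring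
          nlinarith [sq_abs b]
        nlinarith
  calc dE x y = Real.sqrt (a ^ 2 + a * b + b ^ 2) := by rw [ha, hb]; exact dE_eq_g p q x y
  _ ≤ Real.sqrt (M ^ 2) := Real.sqrt_le_sqrt hsq
  _ = M := Real.sqrt_sq hM0

lemma chainConn_symm {D : Finset Pt} {x y : Pt} (h : chainConn D x y) : chainConn D y x := by
  have hs : Symmetric (fun a b : Pt => a ∈ D ∧ b ∈ D ∧ dE a b = 1) := by
    rintro a b ⟨ha, hb, hd⟩
    exact ⟨hb, ha, by rwa [dE_comm]⟩
  exact (@Relation.ReflTransGen.stdSymm _ _ ⟨fun a b hab => hs hab⟩).symm _ _ h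

lemma chainConn_trans {D : Finset Pt} {x y z : Pt} (h1 : chainConn D x y) (h2 : chainConn D y z) :
    chainConn D x z := Relation.ReflTransGen.trans h1 h2

lemma chain_interval {D : Finset Pt} (F : Pt → ℤ)
    (Hstep : ∀ a ∈ D, ∀ b ∈ D, dE a b = 1 → |F a - F b| ≤ 1)
    {x y : Pt} (hx : x ∈ D) (h : chainConn D x y) :
    ∀ m : ℤ, min (F x) (F y) ≤ m → m ≤ max (F x) (F y) →
      ∃ z ∈ D, chainConn D x z ∧ F z = m := by
  induction h with
  | refl =>
    intro m h1 h2
    exact ⟨x, hx, Relation.ReflTransGen.refl, by omega⟩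
  | @tail b c hxb hbc ih =>
    obtain ⟨hbD, hcD, hd⟩ := hbc
    intro m h1 h2
    obtain ⟨hl, hr⟩ := abs_le.mp (Hstep _ hbD _ hcD hd)
    by_cases hm : min (F x) (F b) ≤ m ∧ m ≤ max (F x) (F b)
    · exact ih m hm.1 hm.2
    · have hmc : m = F c := by omega
      exact ⟨c, hcD, hxb.tail ⟨hbD, hcD, hd⟩, hmc.symm⟩

lemma comp_span {D C : Finset Pt} (F : Pt → ℤ)
    (Hstep : ∀ a ∈ D, ∀ b ∈ D, dE a b = 1 → |F a - F b| ≤ 1)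
    (hcomp : IsComponent D C) {x y : Pt} (hx : x ∈ C) (hy : y ∈ C) :
    |F x - F y| + 1 ≤ ((C.image F).card : ℤ) := by
  obtain ⟨x₀, hx₀D, hchar⟩ := hcomp
  have hxD : x ∈ D := ((hchar x).mp hx).1
  have hyD : y ∈ D := ((hchar y).mp hy).1
  have hxy : chainConn D x y :=
    chainConn_trans (chainConn_symm ((hchar x).mp hx).2) ((hchar y).mp hy).2
  have hsub : Finset.Icc (min (F x) (F y)) (max (F x) (F y)) ⊆ C.image F := by
    intro m hm
    rw [Finset.mem_Icc] at hm
    obtain ⟨z, hzD, hzc, hzF⟩ := chain_interval F Hstep hxD hxy m hm.1 hm.2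
    have hzC : z ∈ C := (hchar z).mpr ⟨hzD, chainConn_trans ((hchar x).mp hx).2 hzc⟩
    exact Finset.mem_image.mpr ⟨z, hzC, hzF⟩
  have hcard := Finset.card_le_card hsub
  rw [Int.card_Icc] at hcard
  have h5 : max (F x) (F y) - min (F x) (F y) = |F x - F y| := by
    rcases le_total (F x) (F y) with h | h
    · rw [max_eq_right h, min_eq_left h, abs_sub_comm, abs_of_nonneg (by omega)]
    · rw [max_eq_left h, min_eq_right h, abs_of_nonneg (by omega)]
  rw [← h5]
  omega

lemma comp_lines {p q : ℕ} {D C : Finset Pt} (hD : ↑D ⊆ LF p q)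
    (hCsub : ∀ z ∈ C, z ∈ D)
    (hN : ∀ z ∈ C, ∀ y ∈ D, dE z y = 1 → y ∈ C)
    (F G : Pt → ℤ) (u : Pt)
    (hu : ∀ z : Pt, z + u ∈ nbrs z)
    (hdu : ∀ z : Pt, dE z (z + u) = 1)
    (hFu : ∀ z : Pt, F (z + u) = F z)
    (hGu : ∀ z : Pt, G (z + u) = G z + 1) :
    (C.image F).card ≤ ((bdry D) ∩ C).card := by
  have hsub : C.image F ⊆ ((bdry D) ∩ C).image F := by
    intro v hv
    obtain ⟨x₀, hx₀, hvx⟩ := Finset.mem_image.mp hv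
    set L := C.filter (fun z => F z = v) with hL
    have hLne : L.Nonempty := ⟨x₀, Finset.mem_filter.mpr ⟨hx₀, hvx⟩⟩
    obtain ⟨x, hxL, hmax⟩ := Finset.exists_max_image L G hLne
    obtain ⟨hxC, hxF⟩ := Finset.mem_filter.mp hxL
    have hxD : x ∈ D := hCsub x hxC
    have hnotin : x + u ∉ D := by
      intro hin
      have hxuC : x + u ∈ C := hN x hxC _ hin (hdu x)
      have hxuL : x + u ∈ L := Finset.mem_filter.mpr ⟨hxuC, by rw [hFu, hxF]⟩
      have hle := hmax _ hxuL
      rw [hGu] at hle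
      omega
    have hbd : x ∈ bdry D := by
      rw [bdry, Finset.mem_filter]
      refine ⟨hxD, ?_⟩
      have hs1 : D.filter (fun y => dE x y = 1) ⊆ (nbrs x).erase (x + u) := by
        intro y hy
        obtain ⟨hyD, hyd⟩ := Finset.mem_filter.mp hy
        refine Finset.mem_erase.mpr ⟨?_, nbr_classify (hD hxD) (hD hyD) hyd⟩
        intro hcon
        exact hnotin (hcon ▸ hyD)
      have hc1 := Finset.card_le_card hs1
      have h2 : ((nbrs x).erase (x + u)).card = (nbrs x).card - 1 :=
        Finset.card_erase_of_mem (hu x)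
      have h3 := card_nbrs x
      have h4 : 0 < (nbrs x).card := Finset.card_pos.mpr ⟨x + u, hu x⟩
      omega
    exact Finset.mem_image.mpr ⟨x, Finset.mem_inter.mpr ⟨hbd, hxC⟩, hxF⟩
  calc (C.image F).card ≤ (((bdry D) ∩ C).image F).card := Finset.card_le_card hsub
  _ ≤ ((bdry D) ∩ C).card := Finset.card_image_le

lemma nbrs_t1 (z : Pt) : z + t1 ∈ nbrs z := by simp [nbrs]
lemma nbrs_t2 (z : Pt) : z + t2 ∈ nbrs z := by simp [nbrs]
lemma nbrs_t12 (z : Pt) : z + (t1 - t2) ∈ nbrs z := by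
  have h : z + (t1 - t2) = z + t1 - t2 := by abel
  simp [nbrs, h]

/-- weight of component `j` in the gluing estimate -/
def Tt (q : ℕ) (F : Pt → ℤ) {k : ℕ} (f : Fin k → Finset Pt) (j : Fin k) : ℝ :=
  (((f j).image F).card : ℝ) - 1 + (if (j : ℕ) = 0 then 0 else 2 / Real.sqrt 3 * q)

/-- partial sums of weights -/
def Ss (q : ℕ) (F : Pt → ℤ) {k : ℕ} (f : Fin k → Finset Pt) (m : ℕ) : ℝ :=
  ∑ j ∈ Finset.univ.filter (fun j : Fin k => (j : ℕ) ≤ m), Tt q F f j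

lemma Tt_nonneg {q : ℕ} {F : Pt → ℤ} {k : ℕ} {f : Fin k → Finset Pt}
    (hne : ∀ i, (f i).Nonempty) (j : Fin k) : 0 ≤ Tt q F f j := by
  unfold Tt
  have h1 : 1 ≤ ((f j).image F).card := Finset.card_pos.mpr ((hne j).image F)
  have h1' : (1:ℝ) ≤ (((f j).image F).card : ℝ) := by exact_mod_cast h1
  have h2 : (0:ℝ) ≤ (if (j : ℕ) = 0 then (0:ℝ) else 2 / Real.sqrt 3 * q) := by
    split
    · exact le_refl _
    · positivity
  linarith

lemma Ss_step {q : ℕ} {F : Pt → ℤ} {k : ℕ} {f : Fin k → Finset Pt}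
    (hne : ∀ i, (f i).Nonempty) (i' : Fin k) (m : ℕ)
    (h1 : 1 ≤ (i' : ℕ)) (h2 : (i' : ℕ) ≤ m) :
    Ss q F f ((i' : ℕ) - 1) + Tt q F f i' ≤ Ss q F f m := by
  have hnotmem : i' ∉ Finset.univ.filter (fun j : Fin k => (j : ℕ) ≤ (i' : ℕ) - 1) := by
    simp only [Finset.mem_filter, Finset.mem_univ, true_and]
    omega
  have hsub : insert i' (Finset.univ.filter fun j : Fin k => (j : ℕ) ≤ (i' : ℕ) - 1)
      ⊆ Finset.univ.filter (fun j : Fin k => (j : ℕ) ≤ m) := by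
    intro j hj
    rcases Finset.mem_insert.mp hj with h | h
    · subst h; simp only [Finset.mem_filter, Finset.mem_univ, true_and]; omega
    · simp only [Finset.mem_filter, Finset.mem_univ, true_and] at h ⊢; omega
  have hle := Finset.sum_le_sum_of_subset_of_nonneg (f := Tt q F f) hsub
    (fun j _ _ => Tt_nonneg (q := q) (F := F) hne j)
  rw [Finset.sum_insert hnotmem] at hle
  unfold Ss
  linarith

lemma glue {p q : ℕ} {D : Finset Pt} (hDL : ↑D ⊆ LF p q)
    {k : ℕ} {f : Fin k → Finset Pt}
    (hcompf : ∀ i, IsComponent D (f i))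
    (hlink : ∀ i : Fin k, 1 ≤ (i : ℕ) →
      ∃ x ∈ f i, ∃ j : Fin k, j < i ∧ ∃ y ∈ f j, dE x y ≤ (q : ℝ))
    (F : Pt → ℤ)
    (Hstep : ∀ a ∈ D, ∀ b ∈ D, dE a b = 1 → |F a - F b| ≤ 1)
    (Hjump : ∀ a ∈ D, ∀ b ∈ D, ((|F a - F b| : ℤ) : ℝ) ≤ 2 / Real.sqrt 3 * dE a b) :
    ∀ (m : ℕ) (i i' : Fin k), (i : ℕ) ≤ m → (i' : ℕ) ≤ m →
      ∀ x ∈ f i, ∀ y ∈ f i', ((|F x - F y| : ℤ) : ℝ) ≤ Ss q F f m := by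
  have hsubD : ∀ i, ∀ z ∈ f i, z ∈ D := by
    intro i z hz
    obtain ⟨a, haD, hch⟩ := hcompf i
    exact ((hch z).mp hz).1
  have hne : ∀ i, (f i).Nonempty := by
    intro i
    obtain ⟨a, haD, hch⟩ := hcompf i
    exact ⟨a, (hch a).mpr ⟨haD, Relation.ReflTransGen.refl⟩⟩
  have hspan : ∀ (i : Fin k), ∀ x ∈ f i, ∀ y ∈ f i,
      ((|F x - F y| : ℤ) : ℝ) ≤ (((f i).image F).card : ℝ) - 1 := by
    intro i x hx y hy
    have h := comp_span F Hstep (hcompf i) hx hy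
    have h2 : ((|F x - F y| : ℤ) : ℝ) + 1 ≤ (((f i).image F).card : ℝ) := by
      exact_mod_cast h
    linarith
  intro m
  induction m using Nat.strong_induction_on with
  | _ m ih =>
    have key : ∀ (i i' : Fin k), (i : ℕ) ≤ m → (i' : ℕ) ≤ m → (i : ℕ) < (i' : ℕ) →
        ∀ x ∈ f i, ∀ y ∈ f i', ((|F x - F y| : ℤ) : ℝ) ≤ Ss q F f m := by
      intro i i' him him' hlt x hx y hy
      obtain ⟨x', hx', j, hji, y', hy', hdist⟩ := hlink i' (by omega)
      have hjv : (j : ℕ) < (i' : ℕ) := hji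
      have htri : |F x - F y| ≤ |F x - F y'| + (|F y' - F x'| + |F x' - F y|) := by
        calc |F x - F y| ≤ |F x - F x'| + |F x' - F y| := abs_sub_le _ _ _
        _ ≤ (|F x - F y'| + |F y' - F x'|) + |F x' - F y| := by
            gcongr
            exact abs_sub_le _ _ _
        _ = _ := by ring
      have h1 : ((|F x - F y'| : ℤ) : ℝ) ≤ Ss q F f ((i' : ℕ) - 1) :=
        ih ((i' : ℕ) - 1) (by omega) i j (by omega) (by omega) x hx y' hy'
      have h2 : ((|F y' - F x'| : ℤ) : ℝ) ≤ 2 / Real.sqrt 3 * q := by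
        have hj := Hjump y' (hsubD _ _ hy') x' (hsubD _ _ hx')
        refine hj.trans ?_
        have hd' : dE y' x' ≤ (q : ℝ) := by rwa [dE_comm]
        have h3 : (0:ℝ) ≤ 2 / Real.sqrt 3 := by positivity
        nlinarith
      have h3 : ((|F x' - F y| : ℤ) : ℝ) ≤ (((f i').image F).card : ℝ) - 1 :=
        hspan i' x' hx' y hy
      have hstep := Ss_step (q := q) (F := F) hne i' m (by omega) him'
      have hT : Tt q F f i' = (((f i').image F).card : ℝ) - 1 + 2 / Real.sqrt 3 * q := by
        unfold Tt; rw [if_neg (by omega)]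
      have hcast : ((|F x - F y| : ℤ) : ℝ) ≤ ((|F x - F y'| : ℤ) : ℝ)
          + (((|F y' - F x'| : ℤ) : ℝ) + ((|F x' - F y| : ℤ) : ℝ)) := by
        exact_mod_cast htri
      linarith
    intro i i' him him' x hx y hy
    rcases lt_trichotomy ((i : ℕ)) ((i' : ℕ)) with h | h | h
    · exact key i i' him him' h x hx y hy
    · have hii : i = i' := Fin.ext h
      subst hii
      refine (hspan i x hx y hy).trans ?_
      have hTle : (((f i).image F).card : ℝ) - 1 ≤ Tt q F f i := by
        unfold Tt
        split
        · linarith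
        · have : (0:ℝ) ≤ 2 / Real.sqrt 3 * q := by positivity
          linarith
      refine hTle.trans ?_
      exact Finset.single_le_sum (fun j _ => Tt_nonneg hne j)
        (Finset.mem_filter.mpr ⟨Finset.mem_univ i, him⟩)
    · have hres := key i' i him' him h y hy x hx
      rwa [abs_sub_comm] at hres

lemma comp_sub {D C : Finset Pt} (h : IsComponent D C) : ∀ z ∈ C, z ∈ D := by
  obtain ⟨a, haD, hch⟩ := h
  intro z hz
  exact ((hch z).mp hz).1

lemma comp_closed {D C : Finset Pt} (h : IsComponent D C) :
    ∀ z ∈ C, ∀ w ∈ D, dE z w = 1 → w ∈ C := by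
  obtain ⟨a, haD, hch⟩ := h
  intro z hz w hw hd
  have hz' := (hch z).mp hz
  exact (hch w).mpr ⟨hw, hz'.2.tail ⟨hz'.1, hw, hd⟩⟩

lemma comp_ne {D C : Finset Pt} (h : IsComponent D C) : C.Nonempty := by
  obtain ⟨a, haD, hch⟩ := h
  exact ⟨a, (hch a).mpr ⟨haD, Relation.ReflTransGen.refl⟩⟩

lemma comp_eq_of_mem {D C1 C2 : Finset Pt} (h1 : IsComponent D C1) (h2 : IsComponent D C2)
    {z : Pt} (hz1 : z ∈ C1) (hz2 : z ∈ C2) : C1 = C2 := by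
  obtain ⟨a, haD, hcha⟩ := h1
  obtain ⟨b, hbD, hchb⟩ := h2
  have hza := ((hcha z).mp hz1).2
  have hzb := ((hchb z).mp hz2).2
  ext w
  rw [hcha w, hchb w]
  constructor
  · rintro ⟨hwD, hcw⟩
    exact ⟨hwD, chainConn_trans hzb (chainConn_trans (chainConn_symm hza) hcw)⟩
  · rintro ⟨hwD, hcw⟩
    exact ⟨hwD, chainConn_trans hza (chainConn_trans (chainConn_symm hzb) hcw)⟩

lemma Ss_le {p q : ℕ} {D : Finset Pt} (hDL : ↑D ⊆ LF p q)
    {k : ℕ} {f : Fin k → Finset Pt} (hk : 1 ≤ k) (hq : 1 ≤ q)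
    (hcompf : ∀ i, IsComponent D (f i)) (hinj : Function.Injective f)
    (F G : Pt → ℤ) (u : Pt)
    (hu : ∀ z : Pt, z + u ∈ nbrs z) (hdu : ∀ z : Pt, dE z (z + u) = 1)
    (hFu : ∀ z : Pt, F (z + u) = F z) (hGu : ∀ z : Pt, G (z + u) = G z + 1) :
    Ss q F f (k - 1) ≤ (((bdry D).card : ℝ) - 1) * (2 / Real.sqrt 3 * q) := by
  have hc0 : (0:ℝ) ≤ 2 / Real.sqrt 3 * q := by positivity
  have hs2 : Real.sqrt 3 ≤ 2 := by nlinarith [s3_sq, s3_pos, sq_nonneg (Real.sqrt 3 - 2)]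
  have hc1 : (1:ℝ) ≤ 2 / Real.sqrt 3 * q := by
    have hq' : (1:ℝ) ≤ (q:ℝ) := by exact_mod_cast hq
    have h1 : (1:ℝ) ≤ 2 / Real.sqrt 3 := by
      rw [le_div_iff₀ s3_pos]; linarith
    nlinarith
  have hNle : ∀ i, ((f i).image F).card ≤ ((bdry D) ∩ f i).card := fun i =>
    comp_lines hDL (comp_sub (hcompf i)) (comp_closed (hcompf i)) F G u hu hdu hFu hGu
  have hdisj : ∀ i j : Fin k, i ≠ j → Disjoint (f i) (f j) := by
    intro i j hij
    rw [Finset.disjoint_left]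
    intro z hzi hzj
    exact hij (hinj (comp_eq_of_mem (hcompf i) (hcompf j) hzi hzj))
  have hsumB : ∑ i : Fin k, ((bdry D) ∩ f i).card ≤ (bdry D).card := by
    rw [← Finset.card_biUnion (fun i _ j _ hij =>
      Finset.disjoint_of_subset_left Finset.inter_subset_right
        (Finset.disjoint_of_subset_right Finset.inter_subset_right (hdisj i j hij)))]
    exact Finset.card_le_card (Finset.biUnion_subset.mpr fun i _ => Finset.inter_subset_left)
  have hsumN : ∑ i : Fin k, ((f i).image F).card ≤ (bdry D).card :=
    le_trans (Finset.sum_le_sum fun i _ => hNle i) hsumB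
  have hk2 : k ≤ ∑ i : Fin k, ((f i).image F).card := by
    calc k = ∑ _i : Fin k, 1 := by simp
    _ ≤ _ := Finset.sum_le_sum fun i _ => Finset.card_pos.mpr ((comp_ne (hcompf i)).image F)
  have hcardf : (Finset.univ.filter (fun j : Fin k => ¬((j:ℕ) = 0))).card ≤ k - 1 := by
    have hsub : Finset.univ.filter (fun j : Fin k => ¬((j:ℕ) = 0))
        ⊆ Finset.univ.erase ⟨0, hk⟩ := by
      intro j hj
      simp only [Finset.mem_filter, Finset.mem_univ, true_and] at hj
      refine Finset.mem_erase.mpr ⟨?_, Finset.mem_univ j⟩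
      intro hc
      exact hj (by rw [hc])
    have h := Finset.card_le_card hsub
    rwa [Finset.card_erase_of_mem (Finset.mem_univ _), Finset.card_univ, Fintype.card_fin] at h
  have hite : (∑ i : Fin k, (if (i:ℕ) = 0 then (0:ℝ) else 2 / Real.sqrt 3 * q))
      ≤ ((k:ℝ) - 1) * (2 / Real.sqrt 3 * q) := by
    have h1 : (∑ i : Fin k, (if (i:ℕ) = 0 then (0:ℝ) else 2 / Real.sqrt 3 * q))
        = ∑ _i ∈ Finset.univ.filter (fun j : Fin k => ¬((j:ℕ) = 0)), (2 / Real.sqrt 3 * (q:ℝ)) := by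
      rw [Finset.sum_filter]
      congr 1
      ext i
      by_cases h : (i:ℕ) = 0 <;> simp [h]
    rw [h1, Finset.sum_const, nsmul_eq_mul]
    have h2 : ((Finset.univ.filter (fun j : Fin k => ¬((j:ℕ) = 0))).card : ℝ) ≤ (k:ℝ) - 1 := by
      have h3 : ((Finset.univ.filter (fun j : Fin k => ¬((j:ℕ) = 0))).card : ℝ)
          ≤ ((k - 1 : ℕ) : ℝ) := by exact_mod_cast hcardf
      refine h3.trans ?_
      rw [Nat.cast_sub hk]
      norm_num
    exact mul_le_mul_of_nonneg_right h2 hc0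
  -- compute Ss
  have hfilter : Finset.univ.filter (fun j : Fin k => (j:ℕ) ≤ k - 1) = (Finset.univ : Finset (Fin k)) := by
    apply Finset.filter_true_of_mem
    intro j _
    have := j.isLt
    omega
  have hSeq : Ss q F f (k - 1) = (∑ i : Fin k, ((((f i).image F).card : ℝ))) - k
      + (∑ i : Fin k, (if (i:ℕ) = 0 then (0:ℝ) else 2 / Real.sqrt 3 * q)) := by
    unfold Ss Tt
    rw [hfilter, Finset.sum_add_distrib, Finset.sum_sub_distrib]
    simp [Finset.card_univ]
  have hSN : (∑ i : Fin k, ((((f i).image F).card : ℝ))) ≤ ((bdry D).card : ℝ) := by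
    have : ((∑ i : Fin k, ((f i).image F).card : ℕ) : ℝ) ≤ ((bdry D).card : ℝ) := by
      exact_mod_cast hsumN
    rwa [Nat.cast_sum] at this
  have hkr : (k:ℝ) ≤ (∑ i : Fin k, ((((f i).image F).card : ℝ))) := by
    have : ((k:ℕ):ℝ) ≤ ((∑ i : Fin k, ((f i).image F).card : ℕ) : ℝ) := by exact_mod_cast hk2
    rwa [Nat.cast_sum] at this
  have hkr1 : (1:ℝ) ≤ (k:ℝ) := by exact_mod_cast hk
  rw [hSeq]
  nlinarith [mul_nonneg (sub_nonneg.mpr (hkr.trans hSN))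
    (sub_nonneg.mpr hc1)]

end Diam11

open Diam11 in
/-- an almost-connected configuration has diameter at most
`π q #∂D_n`, i.e. `|x - y| ≤ π q #∂D_n` for all atoms `x, y`. -/
theorem diam_le_of_almostConnected
    (cF cS : ℝ) (hcF : 0 < cF) (hcS : 0 < cS)
    (p q : ℕ) (hp : 0 < p) (hq : 0 < q) (hpq : Nat.Coprime p q)
    (n : ℕ) (D : Finset Pt) (hD : D ∈ Cn p q n) (hne : D.Nonempty)
    (hac : AlmostConnected q D) :
    ∀ x ∈ D, ∀ y ∈ D, dE x y ≤ Real.pi * (q : ℝ) * ((bdry D).card : ℝ) := by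
  intro x hx y hy
  obtain ⟨hDL, hcard⟩ := hD
  have hpi : (3 : ℝ) ≤ Real.pi := le_of_lt Real.pi_gt_three
  have hB0 : (0:ℝ) ≤ ((bdry D).card : ℝ) := by positivity
  have Hstep1 : ∀ a ∈ D, ∀ b ∈ D, dE a b = 1 → |F1 p q a - F1 p q b| ≤ 1 :=
    fun a ha b hb hd => (F_step (hDL ha) (hDL hb) hd).1
  have Hstep2 : ∀ a ∈ D, ∀ b ∈ D, dE a b = 1 → |F2 p q a - F2 p q b| ≤ 1 :=
    fun a ha b hb hd => (F_step (hDL ha) (hDL hb) hd).2.1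
  have Hstep3 : ∀ a ∈ D, ∀ b ∈ D, dE a b = 1 → |F3 p q a - F3 p q b| ≤ 1 :=
    fun a ha b hb hd => (F_step (hDL ha) (hDL hb) hd).2.2
  have Hjump1 : ∀ a ∈ D, ∀ b ∈ D,
      ((|F1 p q a - F1 p q b| : ℤ) : ℝ) ≤ 2 / Real.sqrt 3 * dE a b :=
    fun a ha b hb => (F_jump (hDL ha) (hDL hb)).1
  have Hjump2 : ∀ a ∈ D, ∀ b ∈ D,
      ((|F2 p q a - F2 p q b| : ℤ) : ℝ) ≤ 2 / Real.sqrt 3 * dE a b :=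
    fun a ha b hb => (F_jump (hDL ha) (hDL hb)).2.1
  have Hjump3 : ∀ a ∈ D, ∀ b ∈ D,
      ((|F3 p q a - F3 p q b| : ℤ) : ℝ) ≤ 2 / Real.sqrt 3 * dE a b :=
    fun a ha b hb => (F_jump (hDL ha) (hDL hb)).2.2
  have hmax := dE_le_max3 (hDL hx) (hDL hy)
  by_cases hqone : q = 1
  · -- connected case
    rw [AlmostConnected, if_pos hqone] at hac
    have hcomp : IsComponent D D :=
      ⟨x, hx, fun z => ⟨fun hz => ⟨hz, hac x hx z hz⟩, fun hz => hz.1⟩⟩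
    have hb : ∀ (F G : Pt → ℤ) (u : Pt),
        (∀ a ∈ D, ∀ b ∈ D, dE a b = 1 → |F a - F b| ≤ 1) →
        (∀ z : Pt, z + u ∈ nbrs z) → (∀ z : Pt, dE z (z + u) = 1) →
        (∀ z : Pt, F (z + u) = F z) → (∀ z : Pt, G (z + u) = G z + 1) →
        ((|F x - F y| : ℤ) : ℝ) ≤ ((bdry D).card : ℝ) - 1 := by
      intro F G u HS hu hdu hFu hGu
      have h1 := comp_span F HS hcomp hx hy
      have h2 := comp_lines hDL (fun z hz => hz) (fun z _ w hw _ => hw) F G u hu hdu hFu hGu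
      have h3 : (bdry D) ∩ D = bdry D := Finset.inter_eq_left.mpr (Finset.filter_subset _ _)
      rw [h3] at h2
      have h4 : |F x - F y| + 1 ≤ ((bdry D).card : ℤ) :=
        le_trans h1 (by exact_mod_cast h2)
      have h5 : ((|F x - F y| : ℤ) : ℝ) + 1 ≤ ((bdry D).card : ℝ) := by exact_mod_cast h4
      linarith
    have e1 := hb (F1 p q) (F2 p q) t2 Hstep1 nbrs_t2 dE_unit_t2 (F1_t2 p q) (F2_t2 p q)
    have e2 := hb (F2 p q) (F1 p q) t1 Hstep2 nbrs_t1 dE_unit_t1 (F2_t1 p q) (F1_t1 p q)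
    have e3 := hb (F3 p q) (F1 p q) (t1 - t2) Hstep3 nbrs_t12 dE_unit_t12 (F3_t12 p q) (F1_t12 p q)
    have hd : dE x y ≤ ((bdry D).card : ℝ) - 1 := hmax.trans (max_le e1 (max_le e2 e3))
    have hB1 : (1:ℝ) ≤ ((bdry D).card : ℝ) := by
      have h0 : (0:ℝ) ≤ ((|F1 p q x - F1 p q y| : ℤ) : ℝ) := by positivity
      linarith
    refine hd.trans ?_
    subst hqone
    push_cast
    nlinarith [mul_nonneg (by linarith : (0:ℝ) ≤ Real.pi - 1) hB0]
  · -- almost connected case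
    rw [AlmostConnected, if_neg hqone] at hac
    obtain ⟨k, f, hinj, hcompf, hcompall, hlink⟩ := hac
    have hmem : ∀ z ∈ D, ∃ i, z ∈ f i := by
      intro z hz
      have hzc : IsComponent D (D.filter (fun w => chainConn D z w)) :=
        ⟨z, hz, fun w => Finset.mem_filter⟩
      obtain ⟨i, hi⟩ := hcompall _ hzc
      refine ⟨i, ?_⟩
      rw [← hi]
      exact Finset.mem_filter.mpr ⟨hz, Relation.ReflTransGen.refl⟩
    obtain ⟨i, hxi⟩ := hmem x hx
    obtain ⟨i', hyi⟩ := hmem y hy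
    have hk : 1 ≤ k := i.pos
    have hval : (i : ℕ) ≤ k - 1 := by have := i.isLt; omega
    have hval' : (i' : ℕ) ≤ k - 1 := by have := i'.isLt; omega
    have e1 := (glue hDL hcompf hlink (F1 p q) Hstep1 Hjump1 (k-1) i i' hval hval' x hxi y hyi).trans
      (Ss_le hDL hk hq hcompf hinj (F1 p q) (F2 p q) t2 nbrs_t2 dE_unit_t2 (F1_t2 p q) (F2_t2 p q))
    have e2 := (glue hDL hcompf hlink (F2 p q) Hstep2 Hjump2 (k-1) i i' hval hval' x hxi y hyi).trans
      (Ss_le hDL hk hq hcompf hinj (F2 p q) (F1 p q) t1 nbrs_t1 dE_unit_t1 (F2_t1 p q) (F1_t1 p q))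
    have e3 := (glue hDL hcompf hlink (F3 p q) Hstep3 Hjump3 (k-1) i i' hval hval' x hxi y hyi).trans
      (Ss_le hDL hk hq hcompf hinj (F3 p q) (F1 p q) (t1 - t2) nbrs_t12 dE_unit_t12 (F3_t12 p q) (F1_t12 p q))
    have hgoal : dE x y ≤ (((bdry D).card : ℝ) - 1) * (2 / Real.sqrt 3 * q) :=
      hmax.trans (max_le e1 (max_le e2 e3))
    have hpq : (0:ℝ) < (q:ℝ) := by exact_mod_cast hq
    have hcpos : (0:ℝ) < 2 / Real.sqrt 3 * q := mul_pos (div_pos (by norm_num) s3_pos) hpq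
    have hB1 : (1:ℝ) ≤ ((bdry D).card : ℝ) := by
      by_contra hcon
      push_neg at hcon
      have h0 : (0:ℝ) ≤ ((|F1 p q x - F1 p q y| : ℤ) : ℝ) := by positivity
      have hneg : (((bdry D).card : ℝ) - 1) * (2 / Real.sqrt 3 * q) < 0 :=
        mul_neg_of_neg_of_pos (by linarith) hcpos
      linarith
    refine hgoal.trans ?_
    have h2s : 2 / Real.sqrt 3 ≤ 2 := by
      rw [div_le_iff₀ s3_pos]
      nlinarith [s3_sq, s3_pos, sq_nonneg (Real.sqrt 3 - 1)]
    calc (((bdry D).card : ℝ) - 1) * (2 / Real.sqrt 3 * q)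
        ≤ ((bdry D).card : ℝ) * (2 / Real.sqrt 3 * q) :=
          mul_le_mul_of_nonneg_right (by linarith) (le_of_lt hcpos)
      _ ≤ ((bdry D).card : ℝ) * (Real.pi * q) := by
          apply mul_le_mul_of_nonneg_left ?_ hB0
          apply mul_le_mul_of_nonneg_right ?_ (le_of_lt hpq)
          linarith
      _ = Real.pi * (q : ℝ) * ((bdry D).card : ℝ) := by ring
end
end

section
/- Let Ω ⊂ ℝ^d be an open set, and let (κ_n) and (μ_n) be sequences of finite nonnegative Borel measures on Ω such that: (i) sup_{n ∈ ℕ} (μ_n(Ω) + κ_n(Ω)) < ∞; (ii) (κ_n) is uniformly absolutely continuous with respect to (μ_n), i.e. for every ε > 0 there exists δ > 0 such that for every Borel set A ⊂ Ω and every n ∈ ℕ, μ_n(A) < δ implies κ_n(A) < ε. If there exist Borel measures κ and μ on Ω with κ_n → κ and μ_n → μ in the weak* sense (integrals against every continuous compactly supported function on Ω converge), then κ is absolutely continuous with respect to μ. -/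
open scoped Topology ENNReal
open Filter MeasureTheory

private lemma integral_le_measure_aux {X : Type*} [MeasurableSpace X]
    {ν : Measure X} [IsFiniteMeasure ν] {f : X → ℝ} {L : Set X} (hL : MeasurableSet L)
    (hf : Integrable f ν) (hfL : ∀ x, f x ≤ L.indicator 1 x) :
    ∫ x, f x ∂ν ≤ (ν L).toReal := by
  have hind : Integrable (L.indicator (1 : X → ℝ)) ν :=
    (integrable_indicator_iff hL).2
      (integrableOn_const (measure_lt_top ν L).ne (by simp))
  have h1 : ∫ x, f x ∂ν ≤ ∫ x, L.indicator (1 : X → ℝ) x ∂ν :=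
    integral_mono hf hind hfL
  have h2 : ∫ x, L.indicator (1 : X → ℝ) x ∂ν = (ν L).toReal := by
    rw [integral_indicator hL]
    simp [Measure.restrict_apply_univ]
    rfl
  linarith [h1, h2.le, h2.ge]

private lemma measure_le_integral_aux {X : Type*} [MeasurableSpace X]
    {ν : Measure X} [IsFiniteMeasure ν] {f : X → ℝ} {L : Set X} (hL : MeasurableSet L)
    (hf : Integrable f ν) (hfL : ∀ x, L.indicator 1 x ≤ f x) :
    (ν L).toReal ≤ ∫ x, f x ∂ν := by
  have hind : Integrable (L.indicator (1 : X → ℝ)) ν :=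
    (integrable_indicator_iff hL).2
      (integrableOn_const (measure_lt_top ν L).ne (by simp))
  have h1 : ∫ x, L.indicator (1 : X → ℝ) x ∂ν ≤ ∫ x, f x ∂ν :=
    integral_mono hind hf hfL
  have h2 : ∫ x, L.indicator (1 : X → ℝ) x ∂ν = (ν L).toReal := by
    rw [integral_indicator hL]
    simp [Measure.restrict_apply_univ]
    rfl
  linarith [h1, h2.le, h2.ge]

/-- Urysohn-type helper: in a locally compact regular space, for `K` compact inside an
open `U`, there is a continuous `[0,1]`-valued compactly supported function equal to `1`
on `K` and vanishing outside a compact closed set `L ⊆ U`. -/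
private lemma urysohn_aux {X : Type*} [TopologicalSpace X] [RegularSpace X]
    [LocallyCompactSpace X] {K U : Set X} (hK : IsCompact K) (hU : IsOpen U)
    (hKU : K ⊆ U) :
    ∃ f : X → ℝ, Continuous f ∧ HasCompactSupport f ∧ (∀ x ∈ K, f x = 1) ∧
      (∀ x, f x ∈ Set.Icc (0 : ℝ) 1) ∧
      ∃ L : Set X, IsCompact L ∧ IsClosed L ∧ L ⊆ U ∧ ∀ x ∉ L, f x = 0 := by
  obtain ⟨L, hLcomp, hLclosed, hKL, hLU⟩ := exists_compact_closed_between hK hU hKU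
  obtain ⟨f, hf1, hf0, hfc, hf01⟩ :=
    exists_continuous_one_zero_of_isCompact hK isOpen_interior.isClosed_compl
      (disjoint_compl_right_iff.mpr hKL)
  refine ⟨f, f.continuous, hfc, fun x hx => hf1 hx, hf01, L, hLcomp, hLclosed, hLU,
    fun x hx => hf0 ?_⟩
  exact fun hx' => hx (interior_subset hx')

/-- if finite nonnegative Borel measures `κ_n` on an open set
`Ω ⊂ ℝ^d` are uniformly absolutely continuous with respect to `μ_n`, have uniformly
bounded total masses, and `κ_n ⇀* κ`, `μ_n ⇀* μ` (tested against continuous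
compactly supported functions), then `κ ≪ μ`. -/
theorem limit_absolutelyContinuous
    {d : ℕ} {Ω : Set (Fin d → ℝ)} (hΩ : IsOpen Ω)
    (κn μn : ℕ → Measure ↥Ω) (κ μ : Measure ↥Ω)
    (hκfin : ∀ n, IsFiniteMeasure (κn n)) (hμfin : ∀ n, IsFiniteMeasure (μn n))
    [IsFiniteMeasure κ] [IsFiniteMeasure μ]
    (hbd : ∃ M : ℝ, ∀ n, μn n Set.univ + κn n Set.univ ≤ ENNReal.ofReal M)
    (huac : ∀ ε : ℝ, 0 < ε → ∃ δ : ℝ, 0 < δ ∧ ∀ A : Set ↥Ω, MeasurableSet A →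
      ∀ n, μn n A < ENNReal.ofReal δ → κn n A < ENNReal.ofReal ε)
    (hκconv : ∀ ψ : ↥Ω → ℝ, Continuous ψ → HasCompactSupport ψ →
      Tendsto (fun n => ∫ x, ψ x ∂(κn n)) atTop (𝓝 (∫ x, ψ x ∂κ)))
    (hμconv : ∀ ψ : ↥Ω → ℝ, Continuous ψ → HasCompactSupport ψ →
      Tendsto (fun n => ∫ x, ψ x ∂(μn n)) atTop (𝓝 (∫ x, ψ x ∂μ))) :
    κ ≪ μ := by
  haveI : LocallyCompactSpace ↥Ω := hΩ.locallyCompactSpace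
  haveI : SigmaCompactSpace ↥Ω := sigmaCompactSpace_of_locallyCompact_secondCountable
  -- Key estimate: any compact set inside an open set of small `μₙ`-measure
  -- has small `κ`-measure.
  have key : ∀ ε : ℝ, 0 < ε → ∀ δ : ℝ, 0 < δ →
      (∀ A : Set ↥Ω, MeasurableSet A → ∀ n, μn n A < ENNReal.ofReal δ →
        κn n A < ENNReal.ofReal ε) →
      ∀ U : Set ↥Ω, IsOpen U → μ U < ENNReal.ofReal δ →
      ∀ K : Set ↥Ω, IsCompact K → K ⊆ U → κ K ≤ ENNReal.ofReal ε := by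
    intro ε hε δ hδ hδ' U hUopen hUδ K hK hKU
    obtain ⟨φ, hφc, hφcs, hφ1, hφ01, L, hLcomp, hLclosed, hLU, hφ0⟩ :=
      urysohn_aux hK hUopen hKU
    obtain ⟨φ', hφ'c, hφ'cs, hφ'1, hφ'01, L', hL'comp, hL'closed, hL'U, hφ'0⟩ :=
      urysohn_aux hLcomp hUopen hLU
    -- ∫ φ' dμ ≤ μ L' ≤ μ U < δ
    have hφ'int : Integrable φ' μ := hφ'c.integrable_of_hasCompactSupport hφ'cs
    have h2 : ∫ x, φ' x ∂μ ≤ (μ U).toReal := by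
      refine le_trans (integral_le_measure_aux hL'closed.measurableSet hφ'int
        fun x => ?_) ?_
      · by_cases hx : x ∈ L'
        · simpa [Set.indicator_of_mem hx] using (hφ'01 x).2
        · simp [Set.indicator_of_notMem hx, hφ'0 x hx]
      · exact ENNReal.toReal_mono (measure_ne_top μ U) (measure_mono hL'U)
    have hUtop : (μ U).toReal < δ := by
      have := ENNReal.toReal_strict_mono (by simp) hUδ
      simpa [ENNReal.toReal_ofReal hδ.le] using this
    have h3 : ∫ x, φ' x ∂μ < δ := lt_of_le_of_lt h2 hUtop
    -- eventually μn n L < δ, hence κn n L < ε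
    have h4 : ∀ᶠ n in atTop, μn n L < ENNReal.ofReal δ := by
      have := (hμconv φ' hφ'c hφ'cs).eventually (eventually_lt_nhds h3)
      filter_upwards [this] with n hn
      haveI := hμfin n
      have hle : (μn n L).toReal ≤ ∫ x, φ' x ∂(μn n) := by
        refine measure_le_integral_aux hLclosed.measurableSet
          (hφ'c.integrable_of_hasCompactSupport hφ'cs) fun x => ?_
        by_cases hx : x ∈ L
        · simp [Set.indicator_of_mem hx, (hφ'1 x hx).ge]
        · simp [Set.indicator_of_notMem hx, (hφ'01 x).1]
      have : (μn n L).toReal < δ := lt_of_le_of_lt hle hn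
      exact (ENNReal.lt_ofReal_iff_toReal_lt (measure_ne_top _ _)).2 this
    have h5 : ∀ᶠ n in atTop, κn n L < ENNReal.ofReal ε := by
      filter_upwards [h4] with n hn
      exact hδ' L hLclosed.measurableSet n hn
    -- eventually ∫ φ dκn ≤ ε, pass to the limit
    have h6 : ∀ᶠ n in atTop, ∫ x, φ x ∂(κn n) ≤ ε := by
      filter_upwards [h5] with n hn
      haveI := hκfin n
      have hle : ∫ x, φ x ∂(κn n) ≤ (κn n L).toReal := by
        refine integral_le_measure_aux hLclosed.measurableSet
          (hφc.integrable_of_hasCompactSupport hφcs) fun x => ?_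
        by_cases hx : x ∈ L
        · simpa [Set.indicator_of_mem hx] using (hφ01 x).2
        · simp [Set.indicator_of_notMem hx, hφ0 x hx]
      have : (κn n L).toReal ≤ ε := by
        have := ENNReal.toReal_mono (by simp) hn.le
        simpa [ENNReal.toReal_ofReal hε.le] using this
      linarith
    have h7 : ∫ x, φ x ∂κ ≤ ε := le_of_tendsto (hκconv φ hφc hφcs) h6
    -- κ K ≤ ∫ φ dκ ≤ ε
    have h8 : (κ K).toReal ≤ ∫ x, φ x ∂κ := by
      refine measure_le_integral_aux hK.isClosed.measurableSet
        (hφc.integrable_of_hasCompactSupport hφcs) fun x => ?_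
      by_cases hx : x ∈ K
      · simp [Set.indicator_of_mem hx, (hφ1 x hx).ge]
      · simp [Set.indicator_of_notMem hx, (hφ01 x).1]
    refine (ENNReal.le_ofReal_iff_toReal_le (measure_ne_top _ _) hε.le).2 ?_
    linarith
  -- Now the absolute continuity.
  intro A hA
  refine le_antisymm ?_ zero_le
  have main : ∀ ε : ℝ, 0 < ε → κ A ≤ ENNReal.ofReal ε := by
    intro ε hε
    obtain ⟨δ, hδ, hδ'⟩ := huac ε hε
    have hAδ : μ A < ENNReal.ofReal δ := by
      rw [hA]; exact ENNReal.ofReal_pos.2 hδ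
    obtain ⟨U, hAU, hUopen, hUδ⟩ := Set.exists_isOpen_lt_of_lt A _ hAδ
    have hκU : κ U ≤ ENNReal.ofReal ε := by
      by_contra h
      push_neg at h
      obtain ⟨K, hKU, hKcomp, hKε⟩ :=
        (Measure.Regular.innerRegular (μ := κ)) hUopen _ h
      exact absurd (key ε hε δ hδ hδ' U hUopen hUδ K hKcomp hKU) (not_le.2 hKε)
    exact le_trans (measure_mono hAU) hκU
  refine ENNReal.le_of_forall_pos_le_add fun ε hε _ => ?_
  rw [zero_add]
  simpa [ENNReal.ofReal_coe_nnreal] using main ε (by exact_mod_cast hε)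
end
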